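/- The set of piecewise affine locally eventually onto maps is dense in (CP, ρ). -/

import Mathlib

open Set Function Metric

/-- The unit interval `[0,1]` with the Euclidean metric. -/
abbrev unitI : Type := Set.Icc (0:ℝ) 1

/-- `CP`: continuous surjective self-maps of `I` with a dense set of periodic points.
The ambient space `C(I,I)` carries the uniform (sup) metric. -/
def CP : Set C(unitI, unitI) :=
  {f | Function.Surjective ⇑f ∧ Dense (Function.periodicPts ⇑f)}

/-- `f` is locally eventually onto (leo, topologically exact): every nonempty open
subset of `I` is mapped onto `I` by some iterate of `f`. -/
def Leo (f : unitI → unitI) : Prop :=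
  ∀ U : Set unitI, IsOpen U → U.Nonempty → ∃ n : ℕ, f^[n] '' U = Set.univ

/-- `f` is piecewise affine: there is a finite partition
`0 = a 0 < a 1 < … < a m = 1` such that `f` is affine on each `[a i, a (i+1)]`. -/
def PiecewiseAffine (f : unitI → unitI) : Prop :=
  ∃ (m : ℕ) (a : ℕ → ℝ), 0 < m ∧ a 0 = 0 ∧ a m = 1 ∧
    (∀ i < m, a i < a (i + 1)) ∧
    ∀ i < m, ∃ c d : ℝ, ∀ x : unitI,
      a i ≤ (x : ℝ) → (x : ℝ) ≤ a (i + 1) → ((f x : ℝ) = c * (x : ℝ) + d)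


set_option maxHeartbeats 1000000

noncomputable section
namespace PALeo

/-- clamp to [0,1] -/
def clamp (y : ℝ) : ℝ := max 0 (min 1 y)

lemma clamp_mem (y : ℝ) : 0 ≤ clamp y ∧ clamp y ≤ 1 := by
  unfold clamp
  constructor
  · exact le_max_left _ _
  · rcases le_total 1 y with h | h <;> rcases le_total (0:ℝ) y with h2 | h2 <;>
      simp [max_le_iff, min_le_iff] <;> linarith

lemma clamp_dist (y Fv : ℝ) (h0 : 0 ≤ Fv) (h1 : Fv ≤ 1) : |clamp y - Fv| ≤ |y - Fv| := by
  unfold clamp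
  rcases le_total 1 y with h | h
  · rw [min_eq_left h, max_eq_right (by linarith : (0:ℝ) ≤ 1)]
    rw [abs_of_nonneg (by linarith), abs_of_nonneg (by linarith)]; linarith
  · rw [min_eq_right h]
    rcases le_total 0 y with h2 | h2
    · rw [max_eq_right h2]
    · rw [max_eq_left h2, abs_of_nonpos (by linarith), abs_of_nonpos (by linarith)]; linarith

variable (f : C(unitI, unitI)) (E : ℝ) (n : ℕ)

/-- grid point j/n as an element of unitI (j clamped to ≤ n). -/
def pt (j : ℕ) : unitI :=
  ⟨(min j n : ℕ) / n, by
    constructor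
    · positivity
    · rcases Nat.eq_zero_or_pos n with h | h
      · simp [h]
      · rw [div_le_one (by exact_mod_cast h)]
        exact_mod_cast Nat.min_le_right j n⟩

def F (j : ℕ) : ℝ := ((f (pt n j)) : ℝ)

lemma F_mem (j : ℕ) : 0 ≤ F f n j ∧ F f n j ≤ 1 := (f (pt n j)).2

def ee (j : ℕ) : ℝ := if F f n j ≤ 1/2 then E/2 else -(E/2)

/-- node values -/
def W (k : ℕ) : ℝ :=
  if k % 6 = 0 then F f n (k/6)
  else if k % 6 = 1 then F f n (k/6) + ee f E n (k/6)
  else if k % 6 = 2 then clamp (F f n (k/6) - ee f E n (k/6))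
  else if k % 6 = 3 then F f n (k/6) + ee f E n (k/6) / 2
  else if k % 6 = 4 then clamp (F f n (k/6+1) - ee f E n (k/6+1))
  else F f n (k/6+1) + ee f E n (k/6+1)

def G (x : ℝ) : ℝ := ∑ k ∈ Finset.range (6*n+1), W f E n k * max 0 (1 - |6*n*x - k|)

lemma contG : Continuous (G f E n) := by
  unfold G
  apply continuous_finset_sum
  intro k _
  exact continuous_const.mul (continuous_const.max (continuous_const.sub
    (((continuous_const.mul continuous_id).sub continuous_const).abs)))


lemma W0 (j : ℕ) : W f E n (6*j) = F f n j := by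
  have h : (6*j) % 6 = 0 ∧ (6*j)/6 = j := by omega
  simp [W, h.1, h.2]

lemma W1 (j : ℕ) : W f E n (6*j+1) = F f n j + ee f E n j := by
  have h : (6*j+1) % 6 = 1 ∧ (6*j+1)/6 = j := by omega
  simp [W, h.1, h.2]

lemma W2 (j : ℕ) : W f E n (6*j+2) = clamp (F f n j - ee f E n j) := by
  have h : (6*j+2) % 6 = 2 ∧ (6*j+2)/6 = j := by omega
  simp [W, h.1, h.2]

lemma W3 (j : ℕ) : W f E n (6*j+3) = F f n j + ee f E n j / 2 := by
  have h : (6*j+3) % 6 = 3 ∧ (6*j+3)/6 = j := by omega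
  simp [W, h.1, h.2]

lemma W4 (j : ℕ) : W f E n (6*j+4) = clamp (F f n (j+1) - ee f E n (j+1)) := by
  have h : (6*j+4) % 6 = 4 ∧ (6*j+4)/6 = j := by omega
  simp [W, h.1, h.2]

lemma W5 (j : ℕ) : W f E n (6*j+5) = F f n (j+1) + ee f E n (j+1) := by
  have h : (6*j+5) % 6 = 5 ∧ (6*j+5)/6 = j := by omega
  simp [W, h.1, h.2]

lemma ee_abs (j : ℕ) : ee f E n j = E/2 ∨ ee f E n j = -(E/2) := by
  unfold ee; split <;> simp

lemma Fe_mem (hE : 0 < E) (hE2 : E ≤ 1/2) (j : ℕ) :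
    0 ≤ F f n j + ee f E n j ∧ F f n j + ee f E n j ≤ 1 := by
  have hF := F_mem f n j
  unfold ee; split <;> constructor <;> linarith [hF.1, hF.2]

lemma W_mem (hE : 0 < E) (hE2 : E ≤ 1/2) (k : ℕ) :
    0 ≤ W f E n k ∧ W f E n k ≤ 1 := by
  have hF := F_mem f n (k/6)
  have hF1 := F_mem f n (k/6+1)
  have h1 := Fe_mem f E n hE hE2 (k/6)
  have h2 := Fe_mem f E n hE hE2 (k/6+1)
  have hc1 := clamp_mem (F f n (k/6) - ee f E n (k/6))
  have hc2 := clamp_mem (F f n (k/6+1) - ee f E n (k/6+1))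
  have he := ee_abs f E n (k/6)
  have he1 := ee_abs f E n (k/6+1)
  unfold W
  split
  · exact hF
  split
  · exact h1
  split
  · exact hc1
  split
  · rcases he with h | h <;> rw [h] <;> constructor <;>
      first
        | linarith [hF.1, hF.2]
        | (unfold ee at h; revert h; split <;> intro h <;> linarith [hF.1, hF.2])
  split
  · exact hc2
  · exact h2

lemma cellG (hn0 : 0 < n) (k : ℕ) (hk : k < 6*n) (x : ℝ)
    (h1 : (k:ℝ)/(6*n) ≤ x) (h2 : x ≤ ((k:ℝ)+1)/(6*n)) :
    G f E n x = W f E n k + (6*n*x - k) * (W f E n (k+1) - W f E n k) := by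
  have hnr : (0:ℝ) < n := by exact_mod_cast hn0
  have h6 : (0:ℝ) < 6*n := by positivity
  rw [div_le_iff₀ h6] at h1
  rw [le_div_iff₀ h6] at h2
  have hs1 : (k:ℝ) ≤ 6*n*x := by linarith
  have hs2 : 6*n*x ≤ (k:ℝ)+1 := by linarith
  have hsub : ({k, k+1} : Finset ℕ) ⊆ Finset.range (6*n+1) := by
    intro i hi
    simp only [Finset.mem_insert, Finset.mem_singleton] at hi
    rcases hi with rfl | rfl <;> simp <;> omega
  have hvan : ∀ i ∈ Finset.range (6*n+1), i ∉ ({k, k+1} : Finset ℕ) →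
      W f E n i * max 0 (1 - |6*n*x - i|) = 0 := by
    intro i _ hi
    simp only [Finset.mem_insert, Finset.mem_singleton, not_or] at hi
    have habs : 1 ≤ |6*n*x - (i:ℝ)| := by
      rcases lt_or_gt_of_ne hi.1 with h | h
      · have : (i:ℝ) ≤ (k:ℝ) - 1 := by
          have : i + 1 ≤ k := h
          exact_mod_cast by exact_mod_cast (by push_cast; linarith [(show ((i:ℝ)+1) ≤ k from by exact_mod_cast this)] : (i:ℝ) ≤ (k:ℝ)-1)
        rw [abs_of_nonneg (by linarith)]; linarith
      · have hik : k + 2 ≤ i := by omega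
        have : (k:ℝ) + 2 ≤ i := by exact_mod_cast hik
        rw [abs_of_nonpos (by linarith)]; linarith
    rw [max_eq_left (by linarith), mul_zero]
  unfold G
  rw [← Finset.sum_subset hsub hvan, Finset.sum_pair (by omega : k ≠ k+1)]
  have e1 : |6*n*x - (k:ℝ)| = 6*n*x - k := abs_of_nonneg (by linarith)
  have e2 : |6*n*x - ((k:ℕ)+1:ℕ)| = (k:ℝ)+1 - 6*n*x := by
    push_cast
    rw [abs_of_nonpos (by linarith)]; ring
  rw [e1, e2, max_eq_right (by linarith), max_eq_right (by push_cast; linarith)]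
  push_cast
  ring
lemma exists_piece (hn0 : 0 < n) (x : ℝ) (h0 : 0 ≤ x) (h1 : x ≤ 1) :
    ∃ k, k < 6*n ∧ (k:ℝ)/(6*n) ≤ x ∧ x ≤ ((k:ℝ)+1)/(6*n) := by
  have hnr : (0:ℝ) < n := by exact_mod_cast hn0
  have h6 : (0:ℝ) < 6*n := by positivity
  by_cases hc : ⌊6*n*x⌋₊ ≤ 6*n - 1
  · refine ⟨⌊6*n*x⌋₊, by omega, ?_, ?_⟩
    · rw [div_le_iff₀ h6]
      calc ((⌊6*n*x⌋₊:ℝ)) ≤ 6*n*x := Nat.floor_le (by positivity)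
        _ = x * (6*n) := by ring
    · rw [le_div_iff₀ h6]
      have := Nat.lt_floor_add_one (6*n*x)
      nlinarith [Nat.lt_floor_add_one (6*n*x)]
  · refine ⟨6*n-1, by omega, ?_, ?_⟩
    · push_neg at hc
      have h2 : 6*n ≤ ⌊6*n*x⌋₊ := by omega
      have h3 : (6*n:ℝ) ≤ 6*n*x := by
        calc (6*n:ℝ) = ((6*n:ℕ):ℝ) := by push_cast; ring
          _ ≤ (⌊6*n*x⌋₊:ℝ) := by exact_mod_cast h2
          _ ≤ 6*n*x := Nat.floor_le (by positivity)
      have hx1 : 1 ≤ x := by nlinarith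
      have hx : x = 1 := le_antisymm h1 hx1
      rw [hx, div_le_one h6]
      have : ((6*n-1:ℕ):ℝ) = 6*n - 1 := by
        have : (1:ℕ) ≤ 6*n := by omega
        push_cast [this]; ring
      rw [this]; linarith
    · have heq : ((6*n-1:ℕ):ℝ) = 6*n - 1 := by
        have : (1:ℕ) ≤ 6*n := by omega
        push_cast [this]; ring
      rw [heq, le_div_iff₀ h6]
      nlinarith

lemma G_between (hn0 : 0 < n) (k : ℕ) (hk : k < 6*n) (x : ℝ)
    (h1 : (k:ℝ)/(6*n) ≤ x) (h2 : x ≤ ((k:ℝ)+1)/(6*n)) :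
    min (W f E n k) (W f E n (k+1)) ≤ G f E n x ∧
      G f E n x ≤ max (W f E n k) (W f E n (k+1)) := by
  have hnr : (0:ℝ) < n := by exact_mod_cast hn0
  have h6 : (0:ℝ) < 6*n := by positivity
  have hcell := cellG f E n hn0 k hk x h1 h2
  rw [div_le_iff₀ h6] at h1
  rw [le_div_iff₀ h6] at h2
  have hs1 : 0 ≤ 6*n*x - k := by linarith
  have hs2 : 6*n*x - k ≤ 1 := by linarith
  rcases le_total (W f E n k) (W f E n (k+1)) with h | h
  · rw [min_eq_left h, max_eq_right h, hcell]
    constructor <;> nlinarith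
  · rw [min_eq_right h, max_eq_left h, hcell]
    constructor <;> nlinarith

lemma G01 (hE : 0 < E) (hE2 : E ≤ 1/2) (hn0 : 0 < n) (x : ℝ) (h0 : 0 ≤ x) (h1 : x ≤ 1) :
    0 ≤ G f E n x ∧ G f E n x ≤ 1 := by
  obtain ⟨k, hk, ha, hb⟩ := exists_piece n hn0 x h0 h1
  have hbet := G_between f E n hn0 k hk x ha hb
  have w1 := W_mem f E n hE hE2 k
  have w2 := W_mem f E n hE hE2 (k+1)
  constructor
  · calc (0:ℝ) ≤ min (W f E n k) (W f E n (k+1)) := le_min w1.1 w2.1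
      _ ≤ _ := hbet.1
  · calc G f E n x ≤ max (W f E n k) (W f E n (k+1)) := hbet.2
      _ ≤ 1 := max_le w1.2 w2.2

lemma nodeG (hn0 : 0 < n) (k : ℕ) (hk : k ≤ 6*n) :
    G f E n ((k:ℝ)/(6*n)) = W f E n k := by
  have hnr : (0:ℝ) < n := by exact_mod_cast hn0
  have h6 : (0:ℝ) < 6*n := by positivity
  rcases Nat.lt_or_ge k (6*n) with h | h
  · have hc := cellG f E n hn0 k h ((k:ℝ)/(6*n)) le_rfl
      (by apply div_le_div_of_nonneg_right ?_ ?_ <;> linarith)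
    have hx : 6*(n:ℝ)*((k:ℝ)/(6*n)) = k := by field_simp
    rw [hc, hx]; ring
  · have hk6 : k = 6*n := by omega
    obtain ⟨m, hm⟩ : ∃ m, k = m + 1 := ⟨6*n-1, by omega⟩
    subst hm
    have hmlt : m < 6*n := by omega
    have hcast : ((m+1:ℕ):ℝ) = (m:ℝ)+1 := by push_cast; ring
    have hc := cellG f E n hn0 m hmlt (((m:ℝ)+1)/(6*n))
      (by apply div_le_div_of_nonneg_right ?_ ?_ <;> linarith) le_rfl
    rw [hcast, hc]
    have hx : 6*(n:ℝ)*(((m:ℝ)+1)/(6*n)) = (m:ℝ)+1 := by field_simp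
    rw [hx]; ring
lemma clamp_id (y : ℝ) (h0 : 0 ≤ y) (h1 : y ≤ 1) : clamp y = y := by
  unfold clamp; rw [min_eq_right h1, max_eq_right h0]

lemma le_clamp (v y : ℝ) (hv1 : v ≤ 1) (h : v ≤ y) : v ≤ clamp y :=
  le_trans (le_min hv1 h) (le_max_right _ _)

lemma clamp_le' (v y : ℝ) (hv0 : 0 ≤ v) (h : y ≤ v) : clamp y ≤ v :=
  max_le hv0 (le_trans (min_le_right _ _) h)

lemma pt_val (j : ℕ) (hj : j ≤ n) : ((pt n j : unitI) : ℝ) = j/n := by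
  simp [pt, Nat.min_eq_left hj]

lemma Fadj (hn0 : 0 < n)
    (hUC : ∀ u v : unitI, |(u:ℝ) - (v:ℝ)| ≤ 1/n → |((f u):ℝ) - ((f v):ℝ)| ≤ E/8)
    (j : ℕ) (hj : j < n) : |F f n (j+1) - F f n j| ≤ E/8 := by
  have hnr : (0:ℝ) < n := by exact_mod_cast hn0
  apply hUC
  rw [pt_val n (j+1) (by omega), pt_val n j (by omega)]
  have : ((j+1:ℕ):ℝ)/n - (j:ℝ)/n = 1/n := by push_cast; field_simp; ring
  rw [this, abs_of_nonneg (by positivity)]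

lemma ee_pos {j : ℕ} (h : F f n j ≤ 1/2) : ee f E n j = E/2 := if_pos h
lemma ee_neg {j : ℕ} (h : ¬ (F f n j ≤ 1/2)) : ee f E n j = -(E/2) := if_neg h

lemma gapW (hE : 0 < E) (hE2 : E ≤ 1/2) (hn0 : 0 < n)
    (hUC : ∀ u v : unitI, |(u:ℝ) - (v:ℝ)| ≤ 1/n → |((f u):ℝ) - ((f v):ℝ)| ≤ E/8)
    (k : ℕ) (hk : k < 6*n) : E/8 ≤ |W f E n (k+1) - W f E n k| := by
  obtain ⟨j, r, hkjr, hr6⟩ : ∃ j r, k = 6*j + r ∧ r < 6 := ⟨k/6, k%6, by omega, by omega⟩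
  have hjn : j < n := by omega
  have hadj := Fadj f E n hn0 hUC j hjn
  rw [abs_sub_le_iff] at hadj
  have hFj := F_mem f n j
  have hFj1 := F_mem f n (j+1)
  subst hkjr
  rcases le_or_gt (F f n j) (1/2) with hej | hej <;>
    rcases le_or_gt (F f n (j+1)) (1/2) with hej1 | hej1 <;>
    [ (have he := ee_pos f E n hej; have he1 := ee_pos f E n hej1);
      (have he := ee_pos f E n hej; have he1 := ee_neg f E n (not_le.mpr hej1));
      (have he := ee_neg f E n (not_le.mpr hej); have he1 := ee_pos f E n hej1);
      (have he := ee_neg f E n (not_le.mpr hej); have he1 := ee_neg f E n (not_le.mpr hej1)) ] <;>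
    interval_cases r
  all_goals simp -failIfUnchanged only [show ∀ m:ℕ, 6*j+0 = 6*j from fun _ => by ring] at *
  all_goals (
    first
      | (rw [show 6*j+0+1 = 6*j+1 by ring, show 6*j+0 = 6*j by ring, W1, W0])
      | (rw [show 6*j+1+1 = 6*j+2 by ring, W2, W1])
      | (rw [show 6*j+2+1 = 6*j+3 by ring, W3, W2])
      | (rw [show 6*j+3+1 = 6*j+4 by ring, W4, W3])
      | (rw [show 6*j+4+1 = 6*j+5 by ring, W5, W4])
      | (rw [show 6*j+5+1 = 6*(j+1) by ring, W0, W5]))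
  all_goals simp only [he, he1]
  -- now 24 arithmetic goals about clamp and F values
  -- case (+,+)
  · rw [abs_of_nonneg (by linarith)]; linarith
  · apply le_abs.mpr; right
    have h1 : clamp (F f n j - E/2) ≤ F f n j := clamp_le' _ _ hFj.1 (by linarith)
    linarith
  · apply le_abs.mpr; left
    have h1 : clamp (F f n j - E/2) ≤ F f n j := clamp_le' _ _ hFj.1 (by linarith)
    linarith
  · rcases le_total 0 (F f n (j+1) - E/2) with hc | hc
    · apply le_abs.mpr; right
      rw [clamp_id _ hc (by linarith)]; linarith
    · apply le_abs.mpr; right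
      rw [show clamp (F f n (j+1) - E/2) = 0 by
        unfold clamp; rw [min_eq_right (by linarith), max_eq_left (by linarith)]]
      linarith
  · apply le_abs.mpr; left
    have h1 : clamp (F f n (j+1) - E/2) ≤ F f n (j+1) := clamp_le' _ _ hFj1.1 (by linarith)
    linarith
  · apply le_abs.mpr; right
    linarith
  -- case (+,-) : Fj ≤ 1/2 < Fj1
  · rw [abs_of_nonneg (by linarith)]; linarith
  · apply le_abs.mpr; right
    have h1 : clamp (F f n j - E/2) ≤ F f n j := clamp_le' _ _ hFj.1 (by linarith)
    linarith
  · apply le_abs.mpr; left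
    have h1 : clamp (F f n j - E/2) ≤ F f n j := clamp_le' _ _ hFj.1 (by linarith)
    linarith
  · apply le_abs.mpr; left
    rw [show F f n (j+1) - -(E/2) = F f n (j+1) + E/2 by ring]
    rw [clamp_id _ (by linarith) (by linarith)]
    linarith
  · apply le_abs.mpr; right
    have h1 : F f n (j+1) ≤ clamp (F f n (j+1) - -(E/2)) := le_clamp _ _ hFj1.2 (by linarith)
    linarith
  · apply le_abs.mpr; left
    linarith
  -- case (-,+) : Fj1 ≤ 1/2 < Fj
  · rw [abs_of_nonpos (by linarith)]; linarith
  · apply le_abs.mpr; left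
    have h1 : F f n j ≤ clamp (F f n j - -(E/2)) := le_clamp _ _ hFj.2 (by linarith)
    linarith
  · apply le_abs.mpr; right
    have h1 : F f n j ≤ clamp (F f n j - -(E/2)) := le_clamp _ _ hFj.2 (by linarith)
    linarith
  · apply le_abs.mpr; right
    rw [clamp_id _ (by linarith) (by linarith)]
    linarith
  · apply le_abs.mpr; left
    have h1 : clamp (F f n (j+1) - E/2) ≤ F f n (j+1) := clamp_le' _ _ hFj1.1 (by linarith)
    linarith
  · apply le_abs.mpr; right
    linarith
  -- case (-,-)
  · rw [abs_of_nonpos (by linarith)]; linarith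
  · apply le_abs.mpr; left
    have h1 : F f n j ≤ clamp (F f n j - -(E/2)) := le_clamp _ _ hFj.2 (by linarith)
    linarith
  · apply le_abs.mpr; right
    have h1 : F f n j ≤ clamp (F f n j - -(E/2)) := le_clamp _ _ hFj.2 (by linarith)
    linarith
  · apply le_abs.mpr; left
    rw [show F f n (j+1) - -(E/2) = F f n (j+1) + E/2 by ring]
    have hge : min 1 (F f n (j+1) + E/2) ≤ clamp (F f n (j+1) + E/2) := le_max_right _ _
    rcases le_total 1 (F f n (j+1) + E/2) with hc | hc
    · rw [min_eq_left hc] at hge; linarith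
    · rw [min_eq_right hc] at hge; linarith
  · apply le_abs.mpr; right
    have h1 : F f n (j+1) ≤ clamp (F f n (j+1) - -(E/2)) := le_clamp _ _ hFj1.2 (by linarith)
    linarith
  · apply le_abs.mpr; left
    linarith
lemma Wdist (hE : 0 < E) (hE2 : E ≤ 1/2) (hn0 : 0 < n)
    (hUC : ∀ u v : unitI, |(u:ℝ) - (v:ℝ)| ≤ 1/n → |((f u):ℝ) - ((f v):ℝ)| ≤ E/8)
    (j k : ℕ) (hj : j < n) (h1 : 6*j ≤ k) (h2 : k ≤ 6*j+6) :
    |W f E n k - F f n j| ≤ 5*E/8 := by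
  have hadj := Fadj f E n hn0 hUC j hj
  rw [abs_sub_le_iff] at hadj
  have hFj := F_mem f n j
  have hFj1 := F_mem f n (j+1)
  have hcl1 := clamp_dist (F f n j - ee f E n j) (F f n j) hFj.1 hFj.2
  have hcl2 := clamp_dist (F f n (j+1) - ee f E n (j+1)) (F f n j) hFj.1 hFj.2
  have heabs : |ee f E n j| = E/2 := by
    rcases ee_abs f E n j with h | h <;> rw [h] <;> [skip; rw [abs_neg]] <;>
      exact abs_of_nonneg (by linarith)
  have heabs1 : |ee f E n (j+1)| = E/2 := by
    rcases ee_abs f E n (j+1) with h | h <;> rw [h] <;> [skip; rw [abs_neg]] <;>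
      exact abs_of_nonneg (by linarith)
  obtain ⟨r, hr, hk⟩ : ∃ r, r ≤ 6 ∧ k = 6*j + r := ⟨k - 6*j, by omega, by omega⟩
  subst hk
  have habs1 : |F f n j - ee f E n j - F f n j| ≤ E/2 := by
    rw [show F f n j - ee f E n j - F f n j = -(ee f E n j) by ring, abs_neg, heabs]
  have habs2 : |F f n (j+1) - ee f E n (j+1) - F f n j| ≤ 5*E/8 := by
    calc |F f n (j+1) - ee f E n (j+1) - F f n j|
        ≤ |F f n (j+1) - F f n j| + |ee f E n (j+1)| := by
          rw [show F f n (j+1) - ee f E n (j+1) - F f n j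
            = (F f n (j+1) - F f n j) + -(ee f E n (j+1)) by ring]
          exact (abs_add_le _ _).trans (by rw [abs_neg])
      _ ≤ E/8 + E/2 := by
          gcongr
          · rw [abs_sub_le_iff]; exact hadj
          · rw [heabs1]
      _ = 5*E/8 := by ring
  interval_cases r
  · rw [show 6*j+0 = 6*j by ring, W0]; simp; linarith [abs_nonneg (0:ℝ)]
  · rw [W1, show F f n j + ee f E n j - F f n j = ee f E n j by ring, heabs]; linarith
  · rw [W2]; exact le_trans hcl1 (by linarith [habs1])
  · rw [W3, show F f n j + ee f E n j/2 - F f n j = ee f E n j/2 by ring]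
    rw [abs_div, heabs]
    rw [abs_of_nonneg (by norm_num : (0:ℝ) ≤ 2)]
    linarith
  · rw [W4]; exact le_trans hcl2 habs2
  · rw [W5]
    calc |F f n (j+1) + ee f E n (j+1) - F f n j|
        ≤ |F f n (j+1) - F f n j| + |ee f E n (j+1)| := by
          rw [show F f n (j+1) + ee f E n (j+1) - F f n j
            = (F f n (j+1) - F f n j) + ee f E n (j+1) by ring]
          exact abs_add_le _ _
      _ ≤ E/8 + E/2 := by gcongr; · rw [abs_sub_le_iff]; exact hadj
                          · rw [heabs1]
      _ ≤ 5*E/8 := by ring_nf; linarith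
  · rw [show 6*j+6 = 6*(j+1) by ring, W0, abs_sub_comm]
    rw [abs_sub_le_iff]
    constructor <;> linarith
lemma Gdist (hE : 0 < E) (hE2 : E ≤ 1/2) (hn0 : 0 < n)
    (hUC : ∀ u v : unitI, |(u:ℝ) - (v:ℝ)| ≤ 1/n → |((f u):ℝ) - ((f v):ℝ)| ≤ E/8)
    (x : unitI) : |G f E n (x:ℝ) - ((f x):ℝ)| ≤ 3*E/4 := by
  have hnr : (0:ℝ) < n := by exact_mod_cast hn0
  obtain ⟨k, hk, ha, hb⟩ := exists_piece n hn0 (x:ℝ) x.2.1 x.2.2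
  set j := k/6 with hj
  have hjk : 6*j ≤ k ∧ k ≤ 6*j+5 := by omega
  have hjn : j < n := by omega
  have hxj : (j:ℝ)/n ≤ (x:ℝ) ∧ (x:ℝ) ≤ ((j:ℝ)+1)/n := by
    have hc1 : (6*(j:ℝ)) ≤ (k:ℝ) := by exact_mod_cast hjk.1
    have hc2 : (k:ℝ) ≤ 6*(j:ℝ)+5 := by exact_mod_cast hjk.2
    constructor
    · have e1 : (j:ℝ)/n = (6*(j:ℝ))/(6*n) := by field_simp
      rw [e1]
      exact le_trans (div_le_div_of_nonneg_right hc1 (by positivity)) ha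
    · have e1 : ((j:ℝ)+1)/n = (6*(j:ℝ)+6)/(6*n) := by field_simp
      rw [e1]
      exact le_trans hb (div_le_div_of_nonneg_right (by linarith) (by positivity))
  have hfF : |((f x):ℝ) - F f n j| ≤ E/8 := by
    apply hUC
    rw [pt_val n j (by omega)]
    rw [abs_sub_le_iff]
    constructor
    · have : ((j:ℝ)+1)/n - (j:ℝ)/n = 1/n := by field_simp; ring
      linarith [hxj.1, hxj.2]
    · have : ((j:ℝ)+1)/n - (j:ℝ)/n = 1/n := by field_simp; ring
      linarith [hxj.1, hxj.2, (by positivity : (0:ℝ) ≤ 1/n)]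
  have hW1 := Wdist f E n hE hE2 hn0 hUC j k hjn hjk.1 (by omega)
  have hW2 := Wdist f E n hE hE2 hn0 hUC j (k+1) hjn (by omega) (by omega)
  have hbet := G_between f E n hn0 k hk (x:ℝ) ha hb
  rw [abs_sub_le_iff] at hW1 hW2 hfF ⊢
  have hmin : min (W f E n k) (W f E n (k+1)) ≥ F f n j - 5*E/8 := le_min (by linarith [hW1.2]) (by linarith [hW2.2])
  have hmax : max (W f E n k) (W f E n (k+1)) ≤ F f n j + 5*E/8 := max_le (by linarith [hW1.1]) (by linarith [hW2.1])
  constructor <;> linarith [hbet.1, hbet.2]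
def lo (j : ℕ) : ℝ := max 0 (F f n j - E/2)
def hi (j : ℕ) : ℝ := min 1 (F f n j + E/2)

lemma lo_nonneg (j : ℕ) : 0 ≤ lo f E n j := le_max_left _ _
lemma hi_le_one (j : ℕ) : hi f E n j ≤ 1 := min_le_left _ _
lemma lo_le_F (hE : 0 < E) (j : ℕ) : lo f E n j ≤ F f n j :=
  max_le (F_mem f n j).1 (by linarith)
lemma F_le_hi (hE : 0 < E) (j : ℕ) : F f n j ≤ hi f E n j :=
  le_min (F_mem f n j).2 (by linarith)
lemma hi_sub_lo (hE : 0 < E) (hE2 : E ≤ 1/2) (j : ℕ) : E/2 ≤ hi f E n j - lo f E n j := by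
  have hF := F_mem f n j
  rcases le_or_gt (F f n j) (1/2) with h | h
  · rw [hi, min_eq_right (by linarith)]
    have := lo_le_F f E n hE j
    linarith
  · rw [lo, max_eq_right (by linarith)]
    have := F_le_hi f E n hE j
    linarith

lemma cell_image (hE : 0 < E) (hE2 : E ≤ 1/2) (hn0 : 0 < n) (j : ℕ) (hj : j < n) :
    Icc (lo f E n j) (hi f E n j) ⊆ G f E n '' Icc ((j:ℝ)/n) (((j:ℝ)+1)/n) := by
  have hnr : (0:ℝ) < n := by exact_mod_cast hn0
  have hF := F_mem f n j
  set a : ℝ := ((6*j+1:ℕ):ℝ)/(6*n) with ha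
  set b : ℝ := ((6*j+2:ℕ):ℝ)/(6*n) with hb
  have hGa : G f E n a = F f n j + ee f E n j := by rw [ha, nodeG f E n hn0 _ (by omega), W1]
  have hGb : G f E n b = clamp (F f n j - ee f E n j) := by
    rw [hb, nodeG f E n hn0 _ (by omega), show 6*j+2 = 6*j+2 from rfl, W2]
  have hab : a ≤ b := by
    rw [ha, hb]
    apply div_le_div_of_nonneg_right _ (by positivity)
    exact_mod_cast by omega
  have hsub : Icc a b ⊆ Icc ((j:ℝ)/n) (((j:ℝ)+1)/n) := by
    apply Icc_subset_Icc
    · rw [ha]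
      have e1 : (j:ℝ)/n = (6*(j:ℝ))/(6*n) := by field_simp
      rw [e1]
      apply div_le_div_of_nonneg_right _ (by positivity)
      push_cast; linarith
    · rw [hb]
      have e1 : ((j:ℝ)+1)/n = (6*(j:ℝ)+6)/(6*n) := by field_simp
      rw [e1]
      apply div_le_div_of_nonneg_right _ (by positivity)
      push_cast; linarith
  have hival : uIcc (G f E n a) (G f E n b) = Icc (lo f E n j) (hi f E n j) := by
    rcases le_or_gt (F f n j) (1/2) with h | h
    · rw [hGa, hGb, ee_pos f E n h]
      have h1 : F f n j + E/2 = hi f E n j := by rw [hi, min_eq_right (by linarith)]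
      have h2 : clamp (F f n j - E/2) = lo f E n j := by
        rw [clamp, min_eq_right (by linarith), lo]
      rw [h1, h2]
      apply uIcc_of_ge
      calc lo f E n j ≤ F f n j := lo_le_F f E n hE j
        _ ≤ hi f E n j := F_le_hi f E n hE j
    · rw [hGa, hGb, ee_neg f E n (not_le.mpr h)]
      have h1 : F f n j + -(E/2) = lo f E n j := by
        rw [lo, max_eq_right (by linarith)]; ring
      have h2 : clamp (F f n j - -(E/2)) = hi f E n j := by
        rw [clamp, hi]
        rw [show F f n j - -(E/2) = F f n j + E/2 by ring]
        rw [max_eq_right]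
        exact le_min (by norm_num) (by linarith)
      rw [h1, h2]
      apply uIcc_of_le
      calc lo f E n j ≤ F f n j := lo_le_F f E n hE j
        _ ≤ hi f E n j := F_le_hi f E n hE j
  calc Icc (lo f E n j) (hi f E n j) = uIcc (G f E n a) (G f E n b) := hival.symm
    _ ⊆ G f E n '' uIcc a b := intermediate_value_uIcc (contG f E n).continuousOn
    _ = G f E n '' Icc a b := by rw [uIcc_of_le hab]
    _ ⊆ _ := image_mono hsub
lemma max_sub_min_abs (u v : ℝ) : max u v - min u v = |v - u| := by
  rcases le_total u v with h | h
  · rw [max_eq_right h, min_eq_left h, abs_of_nonneg (by linarith)]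
  · rw [max_eq_left h, min_eq_right h, abs_of_nonpos (by linarith)]; ring

lemma onepiece (hE : 0 < E) (hE2 : E ≤ 1/2) (hn0 : 0 < n) (hn16 : (16:ℝ) ≤ n*E)
    (hUC : ∀ u v : unitI, |(u:ℝ) - (v:ℝ)| ≤ 1/n → |((f u):ℝ) - ((f v):ℝ)| ≤ E/8)
    (k : ℕ) (hk : k < 6*n) (p q : ℝ) (hp : (k:ℝ)/(6*n) ≤ p) (hq : q ≤ ((k:ℝ)+1)/(6*n))
    (hpq : p ≤ q) :
    ∃ a' b', 0 ≤ a' ∧ b' ≤ 1 ∧ Icc a' b' ⊆ G f E n '' Icc p q ∧ 12*(q-p) ≤ b' - a' := by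
  have hnr : (0:ℝ) < n := by exact_mod_cast hn0
  have h6 : (0:ℝ) < 6*n := by positivity
  have hp0 : 0 ≤ p := le_trans (by positivity) hp
  have hq1 : q ≤ 1 := le_trans hq (by
    rw [div_le_one h6]
    have : (k:ℝ)+1 ≤ 6*n := by exact_mod_cast hk
    linarith)
  have hGp := G01 f E n hE hE2 hn0 p hp0 (le_trans hpq hq1)
  have hGq := G01 f E n hE hE2 hn0 q (le_trans hp0 hpq) hq1
  refine ⟨min (G f E n p) (G f E n q), max (G f E n p) (G f E n q),
    le_min hGp.1 hGq.1, max_le hGp.2 hGq.2, ?_, ?_⟩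
  · rw [show Icc (min (G f E n p) (G f E n q)) (max (G f E n p) (G f E n q))
      = uIcc (G f E n p) (G f E n q) from rfl]
    calc uIcc (G f E n p) (G f E n q) ⊆ G f E n '' uIcc p q :=
          intermediate_value_uIcc (contG f E n).continuousOn
      _ = G f E n '' Icc p q := by rw [uIcc_of_le hpq]
  · rw [max_sub_min_abs]
    have hcp := cellG f E n hn0 k hk p hp (le_trans hpq hq)
    have hcq := cellG f E n hn0 k hk q (le_trans hp hpq) hq
    have : G f E n q - G f E n p = 6*n*(q-p) * (W f E n (k+1) - W f E n k) := by
      rw [hcp, hcq]; ring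
    rw [this, abs_mul]
    have h1 : |6*(n:ℝ)*(q-p)| = 6*n*(q-p) := abs_of_nonneg (by nlinarith)
    rw [h1]
    have h2 := gapW f E n hE hE2 hn0 hUC k hk
    calc 12*(q-p) = (6*n*(E/8))*(q-p) * (12/(6*n*(E/8))) := by
          field_simp
      _ ≤ (6*n*(E/8))*(q-p) * 1 := by
          apply mul_le_mul_of_nonneg_left _ (by nlinarith)
          rw [div_le_one (by nlinarith)]
          nlinarith
      _ = (6*n*(q-p))*(E/8) := by ring
      _ ≤ 6*n*(q-p) * |W f E n (k+1) - W f E n k| := by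
          apply mul_le_mul_of_nonneg_left h2 (by nlinarith)

lemma expand (hE : 0 < E) (hE2 : E ≤ 1/2) (hn0 : 0 < n) (hn16 : (16:ℝ) ≤ n*E)
    (hUC : ∀ u v : unitI, |(u:ℝ) - (v:ℝ)| ≤ 1/n → |((f u):ℝ) - ((f v):ℝ)| ≤ E/8)
    (a b : ℝ) (h0 : 0 ≤ a) (h1 : b ≤ 1) (hab : a < b) (hlen : b - a ≤ 1/(3*n)) :
    ∃ a' b', 0 ≤ a' ∧ b' ≤ 1 ∧ Icc a' b' ⊆ G f E n '' Icc a b ∧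
      (3/2)*(b-a) ≤ b' - a' := by
  have hnr : (0:ℝ) < n := by exact_mod_cast hn0
  have h6 : (0:ℝ) < 6*n := by positivity
  obtain ⟨k, hk, hka, hkb⟩ := exists_piece n hn0 a h0 (by linarith)
  have h13 : 1/(3*(n:ℝ)) = 2/(6*n) := by ring
  set c : ℝ := ((k:ℝ)+1)/(6*n) with hc
  rcases le_or_gt b c with hbc | hbc
  · obtain ⟨a', b', h0', h1', hsub, hlen'⟩ :=
      onepiece f E n hE hE2 hn0 hn16 hUC k hk a b hka hbc (le_of_lt hab)
    exact ⟨a', b', h0', h1', hsub, by linarith⟩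
  have hk1 : k + 1 < 6*n := by
    by_contra hcon
    have hkeq : k + 1 = 6*n := by omega
    have : ((k:ℝ)+1) = 6*n := by exact_mod_cast hkeq
    rw [hc, this] at hbc
    rw [div_self (by positivity)] at hbc
    linarith
  set c2 : ℝ := ((k:ℝ)+2)/(6*n) with hc2
  have hcc2 : c2 - c = 1/(6*n) := by rw [hc, hc2]; ring
  rcases le_or_gt b c2 with hbc2 | hbc2
  · -- two pieces
    rcases le_or_gt ((b-a)/2) (c-a) with hhalf | hhalf
    · obtain ⟨a', b', h0', h1', hsub, hlen'⟩ :=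
        onepiece f E n hE hE2 hn0 hn16 hUC k hk a c hka le_rfl (by linarith)
      refine ⟨a', b', h0', h1', ?_, by linarith⟩
      exact hsub.trans (image_mono (Icc_subset_Icc le_rfl (by linarith)))
    · obtain ⟨a', b', h0', h1', hsub, hlen'⟩ :=
        onepiece f E n hE hE2 hn0 hn16 hUC (k+1) hk1 c b
          (by rw [hc]; push_cast; exact le_rfl)
          (by push_cast; rw [show ((k:ℝ)+1+1) = (k:ℝ)+2 by ring]; exact hbc2) (by linarith)
      refine ⟨a', b', h0', h1', ?_, by linarith⟩
      exact hsub.trans (image_mono (Icc_subset_Icc (by linarith) le_rfl))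
  · -- three pieces
    have hk2 : k + 2 < 6*n := by
      by_contra hcon
      have hkeq : 6*n ≤ k + 2 := by omega
      have : (6*(n:ℝ)) ≤ (k:ℝ)+2 := by exact_mod_cast hkeq
      have : (1:ℝ) ≤ c2 := by
        rw [hc2, le_div_iff₀ (by positivity)]; linarith
      linarith
    have hb3 : b ≤ ((k:ℝ)+3)/(6*n) := by
      have : ((k:ℝ)+1)/(6*n) + 2/(6*n) = ((k:ℝ)+3)/(6*n) := by ring
      linarith [hkb]
    rcases le_or_gt ((b-a)/3) (c-a) with h3a | h3a
    · obtain ⟨a', b', h0', h1', hsub, hlen'⟩ :=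
        onepiece f E n hE hE2 hn0 hn16 hUC k hk a c hka le_rfl (by linarith)
      refine ⟨a', b', h0', h1', ?_, by linarith⟩
      exact hsub.trans (image_mono (Icc_subset_Icc le_rfl (by linarith)))
    rcases le_or_gt ((b-a)/3) (c2-c) with h3b | h3b
    · obtain ⟨a', b', h0', h1', hsub, hlen'⟩ :=
        onepiece f E n hE hE2 hn0 hn16 hUC (k+1) hk1 c c2
          (by rw [hc]; push_cast; exact le_rfl)
          (by push_cast; rw [show ((k:ℝ)+1+1) = (k:ℝ)+2 by ring, hc2]) (by linarith)
      refine ⟨a', b', h0', h1', ?_, by linarith⟩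
      exact hsub.trans (image_mono (Icc_subset_Icc (by linarith) (by linarith)))
    · obtain ⟨a', b', h0', h1', hsub, hlen'⟩ :=
        onepiece f E n hE hE2 hn0 hn16 hUC (k+2) hk2 c2 b
          (by push_cast; rw [hc2])
          (by push_cast; rw [show ((k:ℝ)+2+1) = (k:ℝ)+3 by ring]; exact hb3) (by linarith)
      refine ⟨a', b', h0', h1', ?_, by linarith⟩
      have hpos : (0:ℝ) < 1/(6*(n:ℝ)) := by positivity
      exact hsub.trans (image_mono (Icc_subset_Icc (by linarith) le_rfl))
lemma grow (hE : 0 < E) (hE2 : E ≤ 1/2) (hn0 : 0 < n) (hn16 : (16:ℝ) ≤ n*E)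
    (hUC : ∀ u v : unitI, |(u:ℝ) - (v:ℝ)| ≤ 1/n → |((f u):ℝ) - ((f v):ℝ)| ≤ E/8)
    (a0 b0 : ℝ) (h0 : 0 ≤ a0) (h1 : b0 ≤ 1) (hab : a0 < b0) (m : ℕ) :
    ∃ a b, 0 ≤ a ∧ b ≤ 1 ∧ Icc a b ⊆ (G f E n)^[m] '' Icc a0 b0 ∧
      min ((3/2)^m*(b0-a0)) (1/(3*n)) ≤ b - a := by
  have hnr : (0:ℝ) < n := by exact_mod_cast hn0
  induction m with
  | zero =>
    refine ⟨a0, b0, h0, h1, by simp, ?_⟩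
    simp only [pow_zero, one_mul]
    exact min_le_left _ _
  | succ m ih =>
    obtain ⟨a, b, ha0, hb1, hsub, hmin⟩ := ih
    have hpow : (0:ℝ) < (3/2)^m*(b0-a0) :=
      mul_pos (pow_pos (by norm_num) m) (sub_pos.mpr hab)
    have h3n : (0:ℝ) < 1/(3*n) := by positivity
    have habm : a < b := by
      rcases min_cases ((3/2)^m*(b0-a0)) (1/(3*(n:ℝ))) with ⟨hm, _⟩ | ⟨hm, _⟩ <;>
        rw [hm] at hmin <;> linarith
    have hcomp : G f E n '' Icc a b ⊆ (G f E n)^[m+1] '' Icc a0 b0 := by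
      rw [Function.iterate_succ', Set.image_comp]
      exact image_mono hsub
    rcases le_or_gt (1/(3*(n:ℝ))) (b-a) with hbig | hsmall
    · -- contains a full piece; image contains a node segment of length ≥ E/8
      set k := ⌈6*(n:ℝ)*a⌉₊ with hkdef
      have hk1 : 6*(n:ℝ)*a ≤ k := Nat.le_ceil _
      have hk2 : (k:ℝ) < 6*n*a + 1 := Nat.ceil_lt_add_one (by positivity)
      have hb16 : a + 2/(6*n) ≤ b := by
        have : 1/(3*(n:ℝ)) = 2/(6*n) := by ring
        linarith
      have hka : (k:ℝ)/(6*n) ≤ a + 1/(6*n) := by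
        rw [div_le_iff₀ (by positivity : (0:ℝ) < 6*n)]
        have e : (a + 1/(6*n))*(6*n) = 6*n*a + 1 := by field_simp
        rw [e]
        exact le_of_lt hk2
      have hklt : k < 6*n := by
        have hble : b ≤ 1 := hb1
        have : (k:ℝ) < 6*n - 1 + 1 := by
          have h2 : a ≤ 1 - 2/(6*n) := by linarith
          calc (k:ℝ) < 6*n*a + 1 := hk2
            _ ≤ 6*n*(1 - 2/(6*n)) + 1 := by nlinarith
            _ = 6*n - 1 := by field_simp; ring
            _ < 6*n - 1 + 1 := by linarith
        have : (k:ℝ) < 6*n := by linarith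
        exact_mod_cast this
      have hpsub : Icc ((k:ℝ)/(6*n)) (((k:ℝ)+1)/(6*n)) ⊆ Icc a b := by
        apply Icc_subset_Icc
        · rw [le_div_iff₀ (by positivity : (0:ℝ) < 6*n)]
          calc a*(6*n) = 6*n*a := by ring
            _ ≤ k := hk1
        · have : ((k:ℝ)+1)/(6*n) ≤ (a + 1/(6*n)) + 1/(6*n) := by
            have := hka
            rw [show ((k:ℝ)+1)/(6*n) = (k:ℝ)/(6*n) + 1/(6*n) by ring]
            linarith
          have h2 : (a + 1/(6*n)) + 1/(6*n) = a + 2/(6*n) := by ring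
          linarith
      set u := W f E n k with hu
      set v := W f E n (k+1) with hv
      have hWu := W_mem f E n hE hE2 k
      have hWv := W_mem f E n hE hE2 (k+1)
      refine ⟨min u v, max u v, le_min hWu.1 hWv.1, max_le hWu.2 hWv.2, ?_, ?_⟩
      · have h1' : uIcc u v ⊆ G f E n '' Icc a b := by
          have e1 : u = G f E n ((k:ℝ)/(6*n)) := (nodeG f E n hn0 k (by omega)).symm
          have e2 : v = G f E n (((k+1:ℕ):ℝ)/(6*n)) := (nodeG f E n hn0 (k+1) (by omega)).symm
          rw [e1, e2]
          calc uIcc (G f E n ((k:ℝ)/(6*n))) (G f E n (((k+1:ℕ):ℝ)/(6*n)))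
              ⊆ G f E n '' uIcc ((k:ℝ)/(6*n)) (((k+1:ℕ):ℝ)/(6*n)) :=
                intermediate_value_uIcc (contG f E n).continuousOn
            _ ⊆ G f E n '' Icc a b := by
                apply image_mono
                rw [uIcc_of_le (by
                  apply div_le_div_of_nonneg_right _ (by positivity)
                  push_cast; linarith)]
                apply subset_trans _ hpsub
                apply Icc_subset_Icc le_rfl
                push_cast
                exact le_rfl
        exact h1'.trans hcomp
      · have hgap := gapW f E n hE hE2 hn0 hUC k hklt
        rw [max_sub_min_abs]
        have hE83 : 1/(3*(n:ℝ)) ≤ E/8 := by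
          rw [div_le_div_iff₀ (by positivity) (by norm_num)]
          nlinarith
        calc min ((3/2)^(m+1)*(b0-a0)) (1/(3*(n:ℝ))) ≤ 1/(3*(n:ℝ)) := min_le_right _ _
          _ ≤ E/8 := hE83
          _ ≤ |v - u| := hgap
    · obtain ⟨a', b', h0', h1', hsub', hlen'⟩ :=
        expand f E n hE hE2 hn0 hn16 hUC a b ha0 hb1 habm (le_of_lt hsmall)
      refine ⟨a', b', h0', h1', hsub'.trans hcomp, ?_⟩
      have key : min ((3/2)^(m+1)*(b0-a0)) (1/(3*(n:ℝ))) ≤ (3/2)*(b-a) := by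
        rcases min_cases ((3/2)^m*(b0-a0)) (1/(3*(n:ℝ))) with ⟨hm, hcmp⟩ | ⟨hm, hcmp⟩
        · rw [hm] at hmin
          calc min ((3/2)^(m+1)*(b0-a0)) (1/(3*(n:ℝ))) ≤ (3/2)^(m+1)*(b0-a0) := min_le_left _ _
            _ = (3/2)*((3/2)^m*(b0-a0)) := by ring
            _ ≤ (3/2)*(b-a) := by linarith
        · rw [hm] at hmin
          calc min ((3/2)^(m+1)*(b0-a0)) (1/(3*(n:ℝ))) ≤ 1/(3*(n:ℝ)) := min_le_right _ _
            _ ≤ (3/2)*(b-a) := by linarith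
      linarith
lemma subcell (m : ℕ) (hm : 0 < m) (α β : ℝ) (h0 : 0 ≤ α) (hβ : β ≤ 1)
    (h : α + 2/m ≤ β) :
    ∃ j, j < m ∧ Icc ((j:ℝ)/m) (((j:ℝ)+1)/m) ⊆ Icc α β := by
  have hmr : (0:ℝ) < m := by exact_mod_cast hm
  set j := ⌈(m:ℝ)*α⌉₊ with hj
  have hj1 : (m:ℝ)*α ≤ j := Nat.le_ceil _
  have hj2 : (j:ℝ) < m*α + 1 := Nat.ceil_lt_add_one (by positivity)
  have hjm : j < m := by
    have : (j:ℝ) < m := by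
      have hα : α ≤ 1 - 2/m := by linarith
      calc (j:ℝ) < m*α + 1 := hj2
        _ ≤ m*(1-2/m) + 1 := by nlinarith
        _ = m - 1 := by field_simp; ring
        _ < m := by linarith
    exact_mod_cast this
  refine ⟨j, hjm, Icc_subset_Icc ?_ ?_⟩
  · rw [le_div_iff₀ hmr]; linarith
  · rw [div_le_iff₀ hmr]
    have : (j:ℝ) + 1 < m*α + 2 := by linarith
    calc (j:ℝ)+1 ≤ m*α + 2 := by linarith
      _ = (α + 2/m)*m := by field_simp
      _ ≤ β*m := by nlinarith

lemma exists_cell (hE : 0 < E) (hE2 : E ≤ 1/2) (hn0 : 0 < n) (hn16 : (16:ℝ) ≤ n*E)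
    (hUC : ∀ u v : unitI, |(u:ℝ) - (v:ℝ)| ≤ 1/n → |((f u):ℝ) - ((f v):ℝ)| ≤ E/8)
    (a0 b0 : ℝ) (h0 : 0 ≤ a0) (h1 : b0 ≤ 1) (hab : a0 < b0) :
    ∃ M0 js, 1 ≤ M0 ∧ js < n ∧
      Icc ((js:ℝ)/n) (((js:ℝ)+1)/n) ⊆ (G f E n)^[M0] '' Icc a0 b0 := by
  have hnr : (0:ℝ) < n := by exact_mod_cast hn0
  have hd0 : 0 < b0 - a0 := by linarith
  obtain ⟨m1, hm1⟩ := pow_unbounded_of_one_lt ((1/(3*(n:ℝ)))/(b0-a0)) (by norm_num : (1:ℝ) < 3/2)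
  have hm1' : 1/(3*(n:ℝ)) ≤ (3/2)^m1*(b0-a0) := by
    rw [div_lt_iff₀ hd0] at hm1
    linarith
  obtain ⟨a, b, ha0, hb1, hsub, hmin⟩ := grow f E n hE hE2 hn0 hn16 hUC a0 b0 h0 h1 hab m1
  have hbig : 1/(3*(n:ℝ)) ≤ b - a := le_trans (le_min hm1' le_rfl) hmin
  -- find a full piece inside [a,b]
  have h26 : a + 2/(6*n) ≤ b := by
    have e : 1/(3*(n:ℝ)) = 2/(6*n) := by ring
    linarith
  obtain ⟨k, hklt, hpsub⟩ := subcell (6*n) (by omega) a b ha0 hb1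
    (by push_cast; push_cast at h26; linarith)
  push_cast at hpsub
  -- image of the piece contains uIcc (W k) (W (k+1))
  set u := W f E n k with hu
  set v := W f E n (k+1) with hv
  have hWu := W_mem f E n hE hE2 k
  have hWv := W_mem f E n hE hE2 (k+1)
  have himg : uIcc u v ⊆ (G f E n)^[m1+1] '' Icc a0 b0 := by
    have e1 : u = G f E n ((k:ℝ)/(6*n)) := (nodeG f E n hn0 k (by omega)).symm
    have e2 : v = G f E n (((k+1:ℕ):ℝ)/(6*n)) := (nodeG f E n hn0 (k+1) (by omega)).symm
    have hcomp : G f E n '' Icc a b ⊆ (G f E n)^[m1+1] '' Icc a0 b0 := by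
      rw [Function.iterate_succ', Set.image_comp]
      exact image_mono hsub
    rw [e1, e2]
    calc uIcc (G f E n ((k:ℝ)/(6*n))) (G f E n (((k+1:ℕ):ℝ)/(6*n)))
        ⊆ G f E n '' uIcc ((k:ℝ)/(6*n)) (((k+1:ℕ):ℝ)/(6*n)) :=
          intermediate_value_uIcc (contG f E n).continuousOn
      _ ⊆ G f E n '' Icc a b := by
          apply image_mono
          rw [uIcc_of_le (by
            apply div_le_div_of_nonneg_right _ (by positivity)
            push_cast; linarith)]
          apply subset_trans _ hpsub
          apply Icc_subset_Icc le_rfl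
          push_cast
          exact le_rfl
      _ ⊆ _ := hcomp
  have hgap := gapW f E n hE hE2 hn0 hUC k hklt
  rw [← hu, ← hv] at hgap
  set α := min u v with hα
  set β := max u v with hβ
  have hlen : E/8 ≤ β - α := by rw [hα, hβ, max_sub_min_abs]; exact hgap
  have h2n : 2/(n:ℝ) ≤ E/8 := by
    rw [div_le_div_iff₀ hnr (by norm_num)]
    nlinarith
  obtain ⟨js, hjs, hcellsub⟩ := subcell n hn0 α β (le_min hWu.1 hWv.1)
    (max_le hWu.2 hWv.2) (by linarith)
  refine ⟨m1+1, js, by omega, hjs, ?_⟩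
  refine subset_trans hcellsub (subset_trans ?_ himg)
  rw [hα, hβ]
  exact subset_rfl
def Lo (p : ℕ × ℕ) : ℝ := sInf (lo f E n '' Set.Ico p.1 p.2)
def Hi (p : ℕ × ℕ) : ℝ := sSup (hi f E n '' Set.Ico p.1 p.2)
def Phi (p : ℕ × ℕ) : ℕ × ℕ := (⌈(n:ℝ) * Lo f E n p⌉₊, ⌊(n:ℝ) * Hi f E n p⌋₊)

def InvP (p : ℕ × ℕ) : Prop := p.1 < p.2 ∧ p.2 ≤ n

lemma img_ne {p : ℕ × ℕ} (h : p.1 < p.2) (g : ℕ → ℝ) :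
    (g '' Set.Ico p.1 p.2).Nonempty := ⟨g p.1, ⟨p.1, ⟨le_rfl, h⟩, rfl⟩⟩

lemma img_fin (p : ℕ × ℕ) (g : ℕ → ℝ) : (g '' Set.Ico p.1 p.2).Finite :=
  (Set.finite_Ico _ _).image _

lemma Lo_le {p : ℕ × ℕ} (k : ℕ) (hk : k ∈ Set.Ico p.1 p.2) : Lo f E n p ≤ lo f E n k :=
  csInf_le ((img_fin p _).bddBelow) ⟨k, hk, rfl⟩

lemma le_Hi {p : ℕ × ℕ} (k : ℕ) (hk : k ∈ Set.Ico p.1 p.2) : hi f E n k ≤ Hi f E n p :=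
  le_csSup ((img_fin p _).bddAbove) ⟨k, hk, rfl⟩

lemma Lo_nonneg {p : ℕ × ℕ} (h : p.1 < p.2) : 0 ≤ Lo f E n p :=
  le_csInf (img_ne h _) (by rintro y ⟨k, _, rfl⟩; exact lo_nonneg f E n k)

lemma Hi_le_one {p : ℕ × ℕ} (h : p.1 < p.2) : Hi f E n p ≤ 1 :=
  csSup_le (img_ne h _) (by rintro y ⟨k, _, rfl⟩; exact hi_le_one f E n k)

lemma Hi_nonneg (hE : 0 < E) {p : ℕ × ℕ} (h : p.1 < p.2) : 0 ≤ Hi f E n p := by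
  refine le_trans ?_ (le_Hi f E n p.1 ⟨le_rfl, h⟩)
  calc (0:ℝ) ≤ F f n p.1 := (F_mem f n p.1).1
    _ ≤ hi f E n p.1 := F_le_hi f E n hE p.1

lemma Lo_attained {p : ℕ × ℕ} (h : p.1 < p.2) :
    ∃ k, k ∈ Set.Ico p.1 p.2 ∧ Lo f E n p = lo f E n k := by
  have := (img_ne h (lo f E n)).csInf_mem (img_fin p _)
  obtain ⟨k, hk, he⟩ := this
  exact ⟨k, hk, he.symm⟩

lemma Hi_attained {p : ℕ × ℕ} (h : p.1 < p.2) :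
    ∃ k, k ∈ Set.Ico p.1 p.2 ∧ Hi f E n p = hi f E n k := by
  have := (img_ne h (hi f E n)).csSup_mem (img_fin p _)
  obtain ⟨k, hk, he⟩ := this
  exact ⟨k, hk, he.symm⟩

lemma inv_Phi (hE : 0 < E) (hE2 : E ≤ 1/2) (hn0 : 0 < n) (hn16 : (16:ℝ) ≤ n*E)
    {p : ℕ × ℕ} (h : InvP n p) : InvP n (Phi f E n p) := by
  have hnr : (0:ℝ) < n := by exact_mod_cast hn0
  obtain ⟨h12, h2n⟩ := h
  have hL := Lo_le f E n p.1 ⟨le_rfl, h12⟩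
  have hH := le_Hi f E n p.1 ⟨le_rfl, h12⟩
  have hgap := hi_sub_lo f E n hE hE2 p.1
  have hLnn := Lo_nonneg f E n h12
  have hH1 := Hi_le_one f E n h12
  constructor
  · -- ⌈n Lo⌉ < ⌊n Hi⌋
    have hceil : (⌈(n:ℝ)*Lo f E n p⌉₊ : ℝ) < n*Lo f E n p + 1 :=
      Nat.ceil_lt_add_one (by positivity)
    have hfloor : (n:ℝ)*Hi f E n p - 1 < (⌊(n:ℝ)*Hi f E n p⌋₊ : ℝ) := by
      have := Nat.lt_floor_add_one ((n:ℝ)*Hi f E n p)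
      linarith [Nat.lt_floor_add_one ((n:ℝ)*Hi f E n p)]
    have hdiff : (n:ℝ)*Hi f E n p - (n:ℝ)*Lo f E n p ≥ 8 := by
      have : Hi f E n p - Lo f E n p ≥ E/2 := by linarith
      nlinarith
    have : (⌈(n:ℝ)*Lo f E n p⌉₊ : ℝ) < (⌊(n:ℝ)*Hi f E n p⌋₊ : ℝ) := by linarith
    exact_mod_cast this
  · -- ⌊n Hi⌋ ≤ n
    have : (n:ℝ)*Hi f E n p ≤ (n:ℝ) := by nlinarith
    calc ⌊(n:ℝ)*Hi f E n p⌋₊ ≤ ⌊(n:ℝ)⌋₊ := Nat.floor_mono this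
      _ = n := Nat.floor_natCast n

lemma Phi_img (hE : 0 < E) (hE2 : E ≤ 1/2) (hn0 : 0 < n) (hn16 : (16:ℝ) ≤ n*E)
    {p : ℕ × ℕ} (h : InvP n p) :
    Icc (((Phi f E n p).1:ℝ)/n) (((Phi f E n p).2:ℝ)/n) ⊆
      G f E n '' Icc ((p.1:ℝ)/n) ((p.2:ℝ)/n) := by
  have hnr : (0:ℝ) < n := by exact_mod_cast hn0
  obtain ⟨h12, h2n⟩ := h
  have hcell : ∀ k, k ∈ Set.Ico p.1 p.2 →
      Icc (lo f E n k) (hi f E n k) ⊆ G f E n '' Icc ((p.1:ℝ)/n) ((p.2:ℝ)/n) := by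
    intro k hk
    refine subset_trans (cell_image f E n hE hE2 hn0 k (by have h1 := hk.1; have h2 := hk.2; omega)) (image_mono ?_)
    apply Icc_subset_Icc
    · apply div_le_div_of_nonneg_right _ (by positivity)
      exact_mod_cast hk.1
    · apply div_le_div_of_nonneg_right _ (by positivity)
      have : (k:ℝ)+1 = ((k+1:ℕ):ℝ) := by push_cast; ring
      rw [this]
      exact_mod_cast hk.2
  obtain ⟨k1, hk1, he1⟩ := Lo_attained f E n h12
  obtain ⟨k2, hk2, he2⟩ := Hi_attained f E n h12
  have hLmem : Lo f E n p ∈ G f E n '' Icc ((p.1:ℝ)/n) ((p.2:ℝ)/n) := by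
    rw [he1]
    exact hcell k1 hk1 ⟨le_rfl, by
      calc lo f E n k1 ≤ F f n k1 := lo_le_F f E n hE k1
        _ ≤ hi f E n k1 := F_le_hi f E n hE k1⟩
  have hHmem : Hi f E n p ∈ G f E n '' Icc ((p.1:ℝ)/n) ((p.2:ℝ)/n) := by
    rw [he2]
    exact hcell k2 hk2 ⟨by
      calc lo f E n k2 ≤ F f n k2 := lo_le_F f E n hE k2
        _ ≤ hi f E n k2 := F_le_hi f E n hE k2, le_rfl⟩
  have hpre : IsPreconnected (G f E n '' Icc ((p.1:ℝ)/n) ((p.2:ℝ)/n)) :=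
    (isPreconnected_Icc).image _ (contG f E n).continuousOn
  have hLU : Icc (Lo f E n p) (Hi f E n p) ⊆ G f E n '' Icc ((p.1:ℝ)/n) ((p.2:ℝ)/n) :=
    hpre.Icc_subset hLmem hHmem
  refine subset_trans ?_ hLU
  apply Icc_subset_Icc
  · rw [le_div_iff₀ hnr]
    calc Lo f E n p * n = n * Lo f E n p := by ring
      _ ≤ _ := Nat.le_ceil _
  · rw [div_le_iff₀ hnr]
    calc ((⌊(n:ℝ)*Hi f E n p⌋₊ : ℝ)) ≤ (n:ℝ)*Hi f E n p :=
        Nat.floor_le (by have := Hi_nonneg f E n hE h12; positivity)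
      _ = Hi f E n p * n := by ring
lemma floor_cell (hn0 : 0 < n) (m : ℕ) (hm : 0 < m) (y : ℝ) (h0 : 0 ≤ y) (h1 : y ≤ 1) :
    ∃ ky, ky < m ∧ (ky:ℝ)/m ≤ y ∧ y ≤ ((ky:ℝ)+1)/m ∧
      y - 1/m ≤ (ky:ℝ)/m ∧ ((ky:ℝ)+1)/m ≤ y + 1/m := by
  have hmr : (0:ℝ) < m := by exact_mod_cast hm
  by_cases hc : ⌊(m:ℝ)*y⌋₊ ≤ m - 1
  · refine ⟨⌊(m:ℝ)*y⌋₊, by omega, ?_, ?_, ?_, ?_⟩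
    · rw [div_le_iff₀ hmr]
      calc ((⌊(m:ℝ)*y⌋₊:ℝ)) ≤ m*y := Nat.floor_le (by positivity)
        _ = y*m := by ring
    · rw [le_div_iff₀ hmr]
      have := Nat.lt_floor_add_one ((m:ℝ)*y)
      nlinarith
    · rw [le_div_iff₀ hmr]
      have h4 := Nat.lt_floor_add_one ((m:ℝ)*y)
      have hinv : (1/(m:ℝ))*m = 1 := by field_simp
      nlinarith [hinv]
    · rw [div_le_iff₀ hmr]
      have h4 := Nat.floor_le (show (0:ℝ) ≤ (m:ℝ)*y by positivity)
      have hinv : (1/(m:ℝ))*m = 1 := by field_simp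
      nlinarith [hinv]
  · push_neg at hc
    have h2 : m ≤ ⌊(m:ℝ)*y⌋₊ := by omega
    have h3 : (m:ℝ) ≤ m*y := by
      calc (m:ℝ) = ((m:ℕ):ℝ) := by norm_num
        _ ≤ (⌊(m:ℝ)*y⌋₊:ℝ) := by exact_mod_cast h2
        _ ≤ m*y := Nat.floor_le (by positivity)
    have hy1 : 1 ≤ y := by nlinarith
    have hy : y = 1 := le_antisymm h1 hy1
    subst hy
    obtain ⟨m', hm'⟩ : ∃ m', m = m' + 1 := ⟨m-1, by omega⟩
    subst hm'
    have hm'r : (0:ℝ) < (m':ℝ)+1 := by positivity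
    refine ⟨m', by omega, ?_, ?_, ?_, ?_⟩ <;> push_cast
    · rw [div_le_one hm'r]; linarith
    · rw [le_div_iff₀ hm'r]; linarith
    · have e : (m':ℝ)/((m':ℝ)+1) = 1 - 1/((m':ℝ)+1) := by field_simp; ring
      rw [e]
    · rw [div_le_iff₀ hm'r]
      have hinv : (1/((m':ℝ)+1))*((m':ℝ)+1) = 1 := by field_simp
      nlinarith [hinv]

lemma Phi_ball (hE : 0 < E) (hE2 : E ≤ 1/2) (hn0 : 0 < n) (hn16 : (16:ℝ) ≤ n*E)
    (hUC : ∀ u v : unitI, |(u:ℝ) - (v:ℝ)| ≤ 1/n → |((f u):ℝ) - ((f v):ℝ)| ≤ E/8)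
    {p : ℕ × ℕ} (h : InvP n p) (w : unitI)
    (hw : (w:ℝ) ∈ Icc ((p.1:ℝ)/n) ((p.2:ℝ)/n))
    (y : unitI) (hy : |(y:ℝ) - ((f w):ℝ)| ≤ E/8) :
    (y:ℝ) ∈ Icc (((Phi f E n p).1:ℝ)/n) (((Phi f E n p).2:ℝ)/n) := by
  have hnr : (0:ℝ) < n := by exact_mod_cast hn0
  obtain ⟨h12, h2n⟩ := h
  have h1n : 1/(n:ℝ) ≤ E/16 := by
    rw [div_le_div_iff₀ hnr (by norm_num)]
    nlinarith
  -- the cell of w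
  set k := min ⌊(n:ℝ)*(w:ℝ)⌋₊ (p.2 - 1) with hk
  have hwcell : (p.1 ≤ k ∧ k < p.2) ∧ (k:ℝ)/n ≤ (w:ℝ) ∧ (w:ℝ) ≤ ((k:ℝ)+1)/n := by
    have hfl1 : ((⌊(n:ℝ)*(w:ℝ)⌋₊:ℝ)) ≤ n*(w:ℝ) :=
      Nat.floor_le (mul_nonneg (le_of_lt hnr) w.2.1)
    have hp1 : (p.1:ℝ) ≤ n*(w:ℝ) := by
      have := hw.1
      rw [div_le_iff₀ hnr] at this
      linarith [this]
    have hp1' : p.1 ≤ ⌊(n:ℝ)*(w:ℝ)⌋₊ := Nat.le_floor hp1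
    constructor
    · constructor
      · omega
      · omega
    constructor
    · rw [div_le_iff₀ hnr]
      have : (k:ℝ) ≤ ((⌊(n:ℝ)*(w:ℝ)⌋₊:ℝ)) := Nat.cast_le.mpr (min_le_left _ _)
      linarith
    · rcases le_or_gt (⌊(n:ℝ)*(w:ℝ)⌋₊) (p.2-1) with hc | hc
      · have hkeq : k = ⌊(n:ℝ)*(w:ℝ)⌋₊ := min_eq_left hc
        rw [le_div_iff₀ hnr, hkeq]
        have := Nat.lt_floor_add_one ((n:ℝ)*(w:ℝ))
        nlinarith
      · have hkeq : k = p.2 - 1 := min_eq_right (by omega)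
        rw [le_div_iff₀ hnr, hkeq]
        have he : ((p.2-1:ℕ):ℝ) + 1 = (p.2:ℝ) := by
          have : (1:ℕ) ≤ p.2 := by omega
          push_cast [this]; ring
        rw [he]
        have := hw.2
        rw [le_div_iff₀ hnr] at this
        nlinarith [this]
  obtain ⟨⟨hk1, hk2⟩, hkw1, hkw2⟩ := hwcell
  have hkn : k < n := by omega
  -- F k is close to f w
  have hFk : |((f w):ℝ) - F f n k| ≤ E/8 := by
    apply hUC
    rw [pt_val n k (by omega)]
    rw [abs_sub_le_iff]
    have e1 : ((k:ℝ)+1)/n - (k:ℝ)/n = 1/n := by ring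
    constructor <;> [linarith [hkw1, hkw2]; skip]
    have hpos : (0:ℝ) ≤ 1/n := by positivity
    linarith [hkw1, hkw2]
  -- the cell of y
  obtain ⟨ky, hkyn, hky1, hky2, hky3, hky4⟩ :=
    floor_cell n hn0 n hn0 (y:ℝ) y.2.1 y.2.2
  rw [abs_sub_le_iff] at hy hFk
  -- lo k ≤ ky/n and (ky+1)/n ≤ hi k
  have hlok : lo f E n k ≤ (ky:ℝ)/n := by
    apply max_le
    · positivity
    · have : F f n k ≤ (y:ℝ) + E/4 := by linarith [hy.2, hFk.1]
      linarith [h1n]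
  have hhik : ((ky:ℝ)+1)/n ≤ hi f E n k := by
    apply le_min
    · rw [div_le_one hnr]
      have : (ky:ℝ) ≤ (n:ℝ)-1 := by
        have h5 : (ky+1:ℕ) ≤ n := by omega
        have h6 : ((ky+1:ℕ):ℝ) ≤ (n:ℝ) := by exact_mod_cast h5
        push_cast at h6
        linarith
      linarith
    · have : (y:ℝ) ≤ F f n k + E/4 := by linarith [hy.1, hFk.2]
      linarith [h1n]
  constructor
  · -- (Phi p).1 / n ≤ y
    have hLlo : Lo f E n p ≤ lo f E n k := Lo_le f E n k ⟨hk1, hk2⟩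
    have : (n:ℝ)*Lo f E n p ≤ (ky:ℝ) := by
      have h2 : (n:ℝ)*Lo f E n p ≤ n*((ky:ℝ)/n) := by
        apply mul_le_mul_of_nonneg_left _ (le_of_lt hnr)
        linarith
      have h3 : (n:ℝ)*((ky:ℝ)/n) = ky := by field_simp
      linarith
    have hceil : (Phi f E n p).1 ≤ ky := Nat.ceil_le.mpr this
    calc ((Phi f E n p).1:ℝ)/n ≤ (ky:ℝ)/n := by
          apply div_le_div_of_nonneg_right _ hnr.le
          exact_mod_cast hceil
      _ ≤ (y:ℝ) := hky1
  · -- y ≤ (Phi p).2 / n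
    have hHhi : hi f E n k ≤ Hi f E n p := le_Hi f E n k ⟨hk1, hk2⟩
    have : ((ky:ℝ)+1) ≤ (n:ℝ)*Hi f E n p := by
      have h2 : (n:ℝ)*(((ky:ℝ)+1)/n) ≤ n*Hi f E n p := by
        apply mul_le_mul_of_nonneg_left _ (le_of_lt hnr)
        linarith
      have h3 : (n:ℝ)*(((ky:ℝ)+1)/n) = (ky:ℝ)+1 := by field_simp
      linarith
    have hfloor : ky + 1 ≤ (Phi f E n p).2 := by
      apply Nat.le_floor
      push_cast
      linarith
    calc (y:ℝ) ≤ ((ky:ℝ)+1)/n := hky2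
      _ ≤ ((Phi f E n p).2:ℝ)/n := by
          apply div_le_div_of_nonneg_right _ hnr.le
          have : ((ky+1:ℕ):ℝ) ≤ ((Phi f E n p).2:ℝ) := by exact_mod_cast hfloor
          push_cast at this
          linarith
lemma Phi_mono (hE : 0 < E) (hE2 : E ≤ 1/2) (hn0 : 0 < n) (hn16 : (16:ℝ) ≤ n*E)
    {p q : ℕ × ℕ} (hp : InvP n p) (hq : InvP n q) (h1 : q.1 ≤ p.1) (h2 : p.2 ≤ q.2) :
    (Phi f E n q).1 ≤ (Phi f E n p).1 ∧ (Phi f E n p).2 ≤ (Phi f E n q).2 := by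
  have hnr : (0:ℝ) < n := by exact_mod_cast hn0
  have hsub : Set.Ico p.1 p.2 ⊆ Set.Ico q.1 q.2 := fun k hk => ⟨le_trans h1 hk.1, lt_of_lt_of_le hk.2 h2⟩
  have hLo : Lo f E n q ≤ Lo f E n p := by
    apply le_csInf (img_ne hp.1 _)
    rintro y ⟨k, hk, rfl⟩
    exact Lo_le f E n k (hsub hk)
  have hHi : Hi f E n p ≤ Hi f E n q := by
    apply csSup_le (img_ne hp.1 _)
    rintro y ⟨k, hk, rfl⟩
    exact le_Hi f E n k (hsub hk)
  constructor
  · exact Nat.ceil_le_ceil (by nlinarith)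
  · exact Nat.floor_le_floor (by nlinarith)

lemma invP_iter (hE : 0 < E) (hE2 : E ≤ 1/2) (hn0 : 0 < n) (hn16 : (16:ℝ) ≤ n*E)
    {p : ℕ × ℕ} (hp : InvP n p) (m : ℕ) : InvP n ((Phi f E n)^[m] p) := by
  induction m with
  | zero => exact hp
  | succ m ih =>
    rw [Function.iterate_succ_apply']
    exact inv_Phi f E n hE hE2 hn0 hn16 ih

lemma Phi_iter_mono (hE : 0 < E) (hE2 : E ≤ 1/2) (hn0 : 0 < n) (hn16 : (16:ℝ) ≤ n*E)
    (m : ℕ) {p q : ℕ × ℕ} (hp : InvP n p) (hq : InvP n q) (h1 : q.1 ≤ p.1) (h2 : p.2 ≤ q.2) :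
    ((Phi f E n)^[m] q).1 ≤ ((Phi f E n)^[m] p).1 ∧
      ((Phi f E n)^[m] p).2 ≤ ((Phi f E n)^[m] q).2 := by
  induction m with
  | zero => exact ⟨h1, h2⟩
  | succ m ih =>
    rw [Function.iterate_succ_apply', Function.iterate_succ_apply']
    exact Phi_mono f E n hE hE2 hn0 hn16
      (invP_iter f E n hE hE2 hn0 hn16 hp m) (invP_iter f E n hE hE2 hn0 hn16 hq m) ih.1 ih.2

lemma chain_ball (hE : 0 < E) (hE2 : E ≤ 1/2) (hn0 : 0 < n) (hn16 : (16:ℝ) ≤ n*E)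
    (hUC : ∀ u v : unitI, |(u:ℝ) - (v:ℝ)| ≤ 1/n → |((f u):ℝ) - ((f v):ℝ)| ≤ E/8)
    (K : ℕ) (hK : 1 ≤ K) :
    ∀ (p : ℕ × ℕ), InvP n p → ∀ (w : unitI), (w:ℝ) ∈ Icc ((p.1:ℝ)/n) ((p.2:ℝ)/n) →
    ∀ y : unitI, |(y:ℝ) - ((f^[K] w :unitI):ℝ)| ≤ E/8 →
      (y:ℝ) ∈ Icc ((((Phi f E n)^[K] p).1:ℝ)/n) ((((Phi f E n)^[K] p).2:ℝ)/n) := by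
  induction K with
  | zero => omega
  | succ K ih =>
    intro p hp w hw y hy
    rcases Nat.eq_zero_or_pos K with hK0 | hK0
    · subst hK0
      simp only [zero_add, Function.iterate_one] at hy ⊢
      exact Phi_ball f E n hE hE2 hn0 hn16 hUC hp w hw y hy
    · have hfw : ((f w :unitI):ℝ) ∈ Icc (((Phi f E n p).1:ℝ)/n) (((Phi f E n p).2:ℝ)/n) :=
        Phi_ball f E n hE hE2 hn0 hn16 hUC hp w hw (f w) (by
          simp only [sub_self, abs_zero]
          positivity)
      have := ih hK0 (Phi f E n p) (inv_Phi f E n hE hE2 hn0 hn16 hp) (f w) hfw y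
        (by rwa [← Function.iterate_succ_apply])
      rwa [← Function.iterate_succ_apply] at this
lemma exists_periodic_between (hdense : Dense (periodicPts ⇑f))
    (a b : ℝ) (h0 : 0 ≤ a) (hab : a < b) (h1 : b ≤ 1) :
    ∃ (z : unitI) (s : ℕ), 0 < s ∧ (⇑f)^[s] z = z ∧ a < (z:ℝ) ∧ (z:ℝ) < b := by
  set V : Set unitI := (fun w : unitI => (w:ℝ)) ⁻¹' (Ioo a b) with hV
  have hopen : IsOpen V := isOpen_Ioo.preimage continuous_subtype_val
  have hne : V.Nonempty := by
    refine ⟨⟨(a+b)/2, ⟨by linarith, by linarith⟩⟩, ?_⟩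
    exact show a < (a+b)/2 ∧ (a+b)/2 < b from ⟨by linarith, by linarith⟩
  obtain ⟨z, hzV, hzP⟩ := dense_iff_inter_open.mp hdense V hopen hne
  obtain ⟨s, hs0, hsz⟩ := hzP
  exact ⟨z, s, hs0, hsz, hzV.1, hzV.2⟩

lemma PL (hE : 0 < E) (hE2 : E ≤ 1/2) (hn0 : 0 < n) (hn16 : (16:ℝ) ≤ n*E)
    (hUC : ∀ u v : unitI, |(u:ℝ) - (v:ℝ)| ≤ 1/n → |((f u):ℝ) - ((f v):ℝ)| ≤ E/8)
    (hdense : Dense (periodicPts ⇑f))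
    (a0 b0 : ℝ) (h0 : 0 ≤ a0) (h1 : b0 ≤ 1) (hab : a0 < b0) :
    ∃ M, 1 ≤ M ∧ Icc (0:ℝ) 1 ⊆ (G f E n)^[M] '' Icc a0 b0 := by
  have hnr : (0:ℝ) < n := by exact_mod_cast hn0
  have h1n : 1/(n:ℝ) ≤ E/16 := by
    rw [div_le_div_iff₀ hnr (by norm_num)]
    nlinarith
  obtain ⟨M0, js, hM0, hjs, hcell⟩ := exists_cell f E n hE hE2 hn0 hn16 hUC a0 b0 h0 h1 hab
  have hs0 : InvP n (js, js+1) := ⟨by omega, by omega⟩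
  set P : ℕ → ℕ × ℕ := fun m => (Phi f E n)^[m] (js, js+1) with hPdef
  have hInv : ∀ m, InvP n (P m) := fun m => invP_iter f E n hE hE2 hn0 hn16 hs0 m
  -- images
  have hA : ∀ m, Icc (((P m).1:ℝ)/n) (((P m).2:ℝ)/n) ⊆ (G f E n)^[M0+m] '' Icc a0 b0 := by
    intro m
    induction m with
    | zero =>
      simp only [hPdef, Function.iterate_zero, id_eq, Nat.add_zero]
      refine subset_trans ?_ hcell
      apply Icc_subset_Icc le_rfl
      push_cast
      exact le_rfl
    | succ m ih =>
      have hstep : Icc (((P (m+1)).1:ℝ)/n) (((P (m+1)).2:ℝ)/n) ⊆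
          G f E n '' Icc (((P m).1:ℝ)/n) (((P m).2:ℝ)/n) := by
        have h2 := Phi_img f E n hE hE2 hn0 hn16 (hInv m)
        have e : P (m+1) = Phi f E n (P m) := Function.iterate_succ_apply' _ _ _
        rw [e]
        exact h2
      refine subset_trans hstep ?_
      rw [show M0+(m+1) = (M0+m)+1 by ring, Function.iterate_succ', Set.image_comp]
      exact image_mono ih
  -- periodic point in the base cell
  obtain ⟨q, T, hT0, hTq, hq1, hq2⟩ := exists_periodic_between f hdense
    ((js:ℝ)/n) (((js:ℝ)+1)/n) (by positivity)
    (by rw [div_lt_div_iff₀ hnr hnr]; nlinarith)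
    (by rw [div_le_one hnr]; exact_mod_cast Nat.succ_le_of_lt hjs)
  -- periodic point q in base cell, with period T
  have hq0 : (q:ℝ) ∈ Icc ((js:ℝ)/n) (((js+1:ℕ):ℝ)/n) :=
    ⟨le_of_lt hq1, by push_cast; exact le_of_lt hq2⟩
  have hAsub : ∀ z : unitI, (z:ℝ) ∈ Icc ((js:ℝ)/n) (((js:ℝ)+1)/n) →
      (z:ℝ) ∈ Icc (((P T).1:ℝ)/n) (((P T).2:ℝ)/n) := by
    intro z hz
    have hcb := chain_ball f E n hE hE2 hn0 hn16 hUC T hT0 (js, js+1) hs0 q hq0 z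
      (by
        rw [hTq, abs_sub_le_iff]
        have e1 : ((js:ℝ)+1)/n - (js:ℝ)/n = 1/n := by ring
        constructor
        · have := hz.1; have := hz.2
          have := le_of_lt hq1; have := le_of_lt hq2
          linarith
        · have := hz.1; have := hz.2
          have := le_of_lt hq1; have := le_of_lt hq2
          linarith)
    exact hcb
  have nat_div_le : ∀ a b : ℕ, (a:ℝ)/n ≤ (b:ℝ)/n → a ≤ b := by
    intro a b h
    rw [div_le_div_iff₀ hnr hnr] at h
    have : (a:ℝ) ≤ b := by nlinarith
    exact_mod_cast this
  have hjs1n : ((js:ℝ)+1)/n ≤ 1 := by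
    rw [div_le_one hnr]; exact_mod_cast Nat.succ_le_of_lt hjs
  have hbase1 : (P T).1 ≤ js := by
    have hm := hAsub ⟨(js:ℝ)/n, ⟨by positivity, by
        rw [div_le_one hnr]; exact_mod_cast le_of_lt hjs⟩⟩
      ⟨le_rfl, by rw [div_le_div_iff₀ hnr hnr]; nlinarith⟩
    exact nat_div_le _ _ hm.1
  have hbase2 : js + 1 ≤ (P T).2 := by
    have hm := hAsub ⟨((js:ℝ)+1)/n, ⟨by positivity, hjs1n⟩⟩
      ⟨by rw [div_le_div_iff₀ hnr hnr]; nlinarith, le_rfl⟩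
    have h2 := hm.2
    have : ((js+1:ℕ):ℝ)/n ≤ ((P T).2:ℝ)/n := by push_cast; exact h2
    exact nat_div_le _ _ this
  have hmonoT : ∀ m, (P ((m+1)*T)).1 ≤ (P (m*T)).1 ∧ (P (m*T)).2 ≤ (P ((m+1)*T)).2 := by
    intro m
    have e : P ((m+1)*T) = (Phi f E n)^[m*T] ((Phi f E n)^[T] (js,js+1)) := by
      show (Phi f E n)^[(m+1)*T] (js,js+1) = _
      rw [show (m+1)*T = m*T + T by ring, Function.iterate_add_apply]
    have hmm := Phi_iter_mono f E n hE hE2 hn0 hn16 (m*T) hs0 (hInv T) hbase1 hbase2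
    rw [e]
    exact hmm
  set u : ℕ → ℕ := fun m => (P (m*T)).1 + (n - (P (m*T)).2) with hu
  have hustep : ∀ m, u (m+1) ≤ u m := by
    intro m
    have h1 := hmonoT m
    have h2 := (hInv ((m+1)*T)).2
    have h3 := (hInv (m*T)).2
    simp only [hu]
    omega
  have humono : ∀ a b : ℕ, a ≤ b → u b ≤ u a := by
    intro a b hle
    induction b, hle using Nat.le_induction with
    | base => exact le_rfl
    | succ b hb ih => exact le_trans (hustep b) ih
  have hchain : ∀ a b : ℕ, a ≤ b → (P (b*T)).1 ≤ (P (a*T)).1 ∧ (P (a*T)).2 ≤ (P (b*T)).2 := by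
    intro a b hle
    induction b, hle using Nat.le_induction with
    | base => exact ⟨le_rfl, le_rfl⟩
    | succ b hb ih => exact ⟨le_trans (hmonoT b).1 ih.1, le_trans ih.2 (hmonoT b).2⟩
  obtain ⟨N, hN⟩ : ∃ N, u N = sInf (Set.range u) := by
    obtain ⟨N, hN⟩ := Nat.sInf_mem (⟨u 0, 0, rfl⟩ : (Set.range u).Nonempty)
    exact ⟨N, hN⟩
  have hstab : ∀ m, N ≤ m → P (m*T) = P (N*T) := by
    intro m hm
    have h1 : u m = u N := le_antisymm (humono N m hm) (hN ▸ Nat.sInf_le ⟨m, rfl⟩)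
    have h2 := hchain N m hm
    have h3 := (hInv (m*T)).2
    have h4 := (hInv (N*T)).2
    have hco : (P (m*T)).1 = (P (N*T)).1 ∧ (P (m*T)).2 = (P (N*T)).2 := by
      simp only [hu] at h1
      omega
    exact Prod.ext hco.1 hco.2
  set c0 := (P (N*T)).1 with hc0def
  set c1 := (P (N*T)).2 with hc1def
  have hc01 : c0 < c1 := (hInv (N*T)).1
  have hc1n : c1 ≤ n := (hInv (N*T)).2
  have hc0c1r : (c0:ℝ)/n < (c1:ℝ)/n := by
    rw [div_lt_div_iff₀ hnr hnr]
    have : (c0:ℝ) < c1 := by exact_mod_cast hc01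
    nlinarith
  have hc1r1 : (c1:ℝ)/n ≤ 1 := by
    rw [div_le_one hnr]; exact_mod_cast hc1n
  have hstepT : ∀ w : unitI, (w:ℝ) ∈ Icc ((c0:ℝ)/n) ((c1:ℝ)/n) →
      ∀ y : unitI, |(y:ℝ) - (((⇑f)^[T] w : unitI):ℝ)| ≤ E/8 →
      (y:ℝ) ∈ Icc ((c0:ℝ)/n) ((c1:ℝ)/n) := by
    intro w hw y hy
    have hcb := chain_ball f E n hE hE2 hn0 hn16 hUC T hT0 (P (N*T)) (hInv (N*T)) w hw y hy
    have e : (Phi f E n)^[T] (P (N*T)) = P (N*T) := by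
      have e1 : (Phi f E n)^[T] (P (N*T)) = P ((N+1)*T) := by
        show _ = (Phi f E n)^[(N+1)*T] (js,js+1)
        rw [show (N+1)*T = T + N*T by ring, Function.iterate_add_apply]
      rw [e1, hstab (N+1) (by omega)]
    rwa [e] at hcb
  have hiterA : ∀ s (w : unitI), (w:ℝ) ∈ Icc ((c0:ℝ)/n) ((c1:ℝ)/n) →
      (((⇑f)^[s*T] w : unitI):ℝ) ∈ Icc ((c0:ℝ)/n) ((c1:ℝ)/n) := by
    intro s
    induction s with
    | zero => intro w hw; simpa using hw
    | succ s ih =>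
      intro w hw
      have e : (⇑f)^[(s+1)*T] w = (⇑f)^[T] ((⇑f)^[s*T] w) := by
        rw [show (s+1)*T = T + s*T by ring, Function.iterate_add_apply]
      rw [e]
      exact hstepT _ (ih w hw) _ (by simp only [sub_self, abs_zero]; positivity)
  -- c0 = 0
  have hc00 : c0 = 0 := by
    by_contra hc0ne
    have hc0pos : (0:ℝ) < (c0:ℝ)/n := by
      have : (0:ℝ) < (c0:ℝ) := by exact_mod_cast Nat.pos_of_ne_zero hc0ne
      positivity
    have hlow : ∀ w : unitI, (w:ℝ) ∈ Icc ((c0:ℝ)/n) ((c1:ℝ)/n) →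
        (c0:ℝ)/n + E/8 ≤ (((⇑f)^[T] w : unitI):ℝ) := by
      intro w hw
      set t := (((⇑f)^[T] w : unitI):ℝ) with ht
      have htmem : 0 ≤ t ∧ t ≤ 1 := ((⇑f)^[T] w).2
      have hymem : 0 ≤ max 0 (t - E/8) ∧ max 0 (t - E/8) ≤ 1 :=
        ⟨le_max_left _ _, max_le (by linarith) (by linarith)⟩
      set y : unitI := ⟨max 0 (t - E/8), hymem⟩ with hydef
      have hy : |(y:ℝ) - t| ≤ E/8 := by
        show |max 0 (t - E/8) - t| ≤ E/8
        rcases max_cases 0 (t - E/8) with ⟨he, hcc⟩ | ⟨he, hcc⟩ <;> rw [he]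
        · rw [abs_of_nonpos (by linarith)]; linarith
        · rw [abs_of_nonpos (by linarith)]; linarith
      have hmem := (hstepT w hw y hy).1
      rcases max_cases 0 (t - E/8) with ⟨he, hcc⟩ | ⟨he, hcc⟩
      · exfalso
        have : (y:ℝ) = 0 := he
        rw [this] at hmem
        linarith
      · have : (y:ℝ) = t - E/8 := he
        rw [this] at hmem
        linarith
    obtain ⟨z, s, hsp, hsz, hz1, hz2⟩ := exists_periodic_between f hdense
      ((c0:ℝ)/n) (min ((c0:ℝ)/n + E/8) ((c1:ℝ)/n)) (le_of_lt hc0pos)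
      (lt_min (by linarith) hc0c1r)
      (le_trans (min_le_right _ _) hc1r1)
    have hzA : (z:ℝ) ∈ Icc ((c0:ℝ)/n) ((c1:ℝ)/n) :=
      ⟨le_of_lt hz1, le_of_lt (lt_of_lt_of_le hz2 (min_le_right _ _))⟩
    have hper : (⇑f)^[s*T] z = z := Function.IsPeriodicPt.mul_const hsz T
    obtain ⟨s', hs'⟩ : ∃ s', s = s' + 1 := ⟨s-1, by omega⟩
    have hw' := hiterA s' z hzA
    have hbig := hlow _ hw'
    have e : (⇑f)^[T] ((⇑f)^[s'*T] z) = z := by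
      rw [← Function.iterate_add_apply, show T + s'*T = s*T by rw [hs']; ring, hper]
    rw [e] at hbig
    have hzup : (z:ℝ) < (c0:ℝ)/n + E/8 := lt_of_lt_of_le hz2 (min_le_left _ _)
    linarith
  -- c1 = n
  have hc1nn : c1 = n := by
    by_contra hc1ne
    have hc1lt : (c1:ℝ)/n < 1 := by
      rw [div_lt_one hnr]
      exact_mod_cast lt_of_le_of_ne hc1n hc1ne
    have hhigh : ∀ w : unitI, (w:ℝ) ∈ Icc ((c0:ℝ)/n) ((c1:ℝ)/n) →
        (((⇑f)^[T] w : unitI):ℝ) ≤ (c1:ℝ)/n - E/8 := by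
      intro w hw
      set t := (((⇑f)^[T] w : unitI):ℝ) with ht
      have htmem : 0 ≤ t ∧ t ≤ 1 := ((⇑f)^[T] w).2
      have hymem : 0 ≤ min 1 (t + E/8) ∧ min 1 (t + E/8) ≤ 1 :=
        ⟨le_min (by linarith) (by linarith), min_le_left _ _⟩
      set y : unitI := ⟨min 1 (t + E/8), hymem⟩ with hydef
      have hy : |(y:ℝ) - t| ≤ E/8 := by
        show |min 1 (t + E/8) - t| ≤ E/8
        rcases min_cases 1 (t + E/8) with ⟨he, hcc⟩ | ⟨he, hcc⟩ <;> rw [he]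
        · rw [abs_of_nonneg (by linarith)]; linarith
        · rw [abs_of_nonneg (by linarith)]; linarith
      have hmem := (hstepT w hw y hy).2
      rcases min_cases 1 (t + E/8) with ⟨he, hcc⟩ | ⟨he, hcc⟩
      · exfalso
        have : (y:ℝ) = 1 := he
        rw [this] at hmem
        linarith
      · have : (y:ℝ) = t + E/8 := he
        rw [this] at hmem
        linarith
    obtain ⟨z, s, hsp, hsz, hz1, hz2⟩ := exists_periodic_between f hdense
      (max ((c0:ℝ)/n) ((c1:ℝ)/n - E/8)) ((c1:ℝ)/n)
      (le_max_of_le_left (by positivity))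
      (max_lt hc0c1r (by linarith))
      hc1r1
    have hzA : (z:ℝ) ∈ Icc ((c0:ℝ)/n) ((c1:ℝ)/n) :=
      ⟨le_of_lt (lt_of_le_of_lt (le_max_left _ _) hz1), le_of_lt hz2⟩
    have hper : (⇑f)^[s*T] z = z := Function.IsPeriodicPt.mul_const hsz T
    obtain ⟨s', hs'⟩ : ∃ s', s = s' + 1 := ⟨s-1, by omega⟩
    have hw' := hiterA s' z hzA
    have hsmall := hhigh _ hw'
    have e : (⇑f)^[T] ((⇑f)^[s'*T] z) = z := by
      rw [← Function.iterate_add_apply, show T + s'*T = s*T by rw [hs']; ring, hper]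
    rw [e] at hsmall
    have hzlow : max ((c0:ℝ)/n) ((c1:ℝ)/n - E/8) < (z:ℝ) := hz1
    have := le_max_right ((c0:ℝ)/n) ((c1:ℝ)/n - E/8)
    linarith
  refine ⟨M0 + N*T, by omega, ?_⟩
  have heq : Icc (0:ℝ) 1 = Icc ((c0:ℝ)/n) ((c1:ℝ)/n) := by
    rw [hc00, hc1nn]
    norm_num
    rw [div_self (ne_of_gt hnr)]
  rw [heq]
  exact hA (N*T)
lemma shrink (x η : ℝ) (hx0 : 0 ≤ x) (hx1 : x ≤ 1) (hη : 0 < η) :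
    ∃ a b, 0 ≤ a ∧ b ≤ 1 ∧ a < b ∧ ∀ z ∈ Icc a b, 0 ≤ z ∧ z ≤ 1 ∧ |z - x| < η := by
  rcases le_or_gt x (1/2) with hc | hc
  · refine ⟨x, min (x + η/2) 1, hx0, min_le_right _ _, lt_min (by linarith) (by linarith), ?_⟩
    intro z hz
    have h1 := hz.1
    have h2 := le_trans hz.2 (min_le_left _ _)
    have h3 := le_trans hz.2 (min_le_right _ _)
    exact ⟨by linarith, h3, by rw [abs_of_nonneg (by linarith)]; linarith⟩
  · refine ⟨max (x - η/2) 0, x, le_max_right _ _, hx1, max_lt (by linarith) (by linarith), ?_⟩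
    intro z hz
    have h1 := le_trans (le_max_left _ _) hz.1
    have h2 := le_trans (le_max_right _ _) hz.1
    have h3 := hz.2
    exact ⟨h2, by linarith, by rw [abs_of_nonpos (by linarith)]; linarith⟩

end PALeo
end


/-- The set of piecewise affine locally eventually onto maps is dense in `(CP, ρ)`. -/
theorem piecewiseAffine_leo_dense_in_CP :
    ∀ f ∈ CP, ∀ ε : ℝ, 0 < ε →
      ∃ g ∈ CP, PiecewiseAffine ⇑g ∧ Leo ⇑g ∧ dist f g < ε := by
  intro f hf ε hε
  classical
  obtain ⟨hfsurj, hfdense⟩ := hf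
  -- choose E
  set E : ℝ := min ε (1/2) with hEdef
  have hE : 0 < E := lt_min hε (by norm_num)
  have hE2 : E ≤ 1/2 := min_le_right _ _
  have hEε : 3*E/4 < ε := by
    rcases le_or_gt ε (1/2) with hc | hc
    · have : E = ε := min_eq_left hc
      rw [this]; linarith
    · have : E ≤ 1/2 := hE2
      linarith
  -- uniform continuity
  have huc := CompactSpace.uniformContinuous_of_continuous f.continuous
  obtain ⟨δ, hδ0, hδ⟩ := Metric.uniformContinuous_iff.mp huc (E/8) (by positivity)
  -- choose n
  obtain ⟨n, hngt⟩ := exists_nat_gt (max (16/E) (1/δ))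
  have hn16r : 16/E < n := lt_of_le_of_lt (le_max_left _ _) hngt
  have hnδ : 1/δ < n := lt_of_le_of_lt (le_max_right _ _) hngt
  have hn0 : 0 < n := by
    have : (0:ℝ) < n := lt_of_lt_of_le (by positivity) (le_of_lt hn16r)
    exact_mod_cast this
  have hnr : (0:ℝ) < n := by exact_mod_cast hn0
  have hn16 : (16:ℝ) ≤ n*E := by
    rw [div_lt_iff₀ hE] at hn16r
    linarith
  have hUC : ∀ u v : unitI, |(u:ℝ) - (v:ℝ)| ≤ 1/n → |((f u):ℝ) - ((f v):ℝ)| ≤ E/8 := by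
    intro u v huv
    have h1n : 1/(n:ℝ) < δ := by
      rw [div_lt_iff₀ hnr]
      rw [div_lt_iff₀ hδ0] at hnδ
      nlinarith
    have hd : dist u v < δ := by
      rw [Subtype.dist_eq, Real.dist_eq]
      linarith
    have := hδ hd
    rw [Subtype.dist_eq, Real.dist_eq] at this
    exact le_of_lt this
  -- the map g
  have hGmem : ∀ x : unitI, PALeo.G f E n (x:ℝ) ∈ Set.Icc (0:ℝ) 1 := fun x =>
    ⟨(PALeo.G01 f E n hE hE2 hn0 (x:ℝ) x.2.1 x.2.2).1,
     (PALeo.G01 f E n hE hE2 hn0 (x:ℝ) x.2.1 x.2.2).2⟩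
  set g : C(unitI, unitI) :=
    ⟨fun x => ⟨PALeo.G f E n (x:ℝ), hGmem x⟩,
      Continuous.subtype_mk ((PALeo.contG f E n).comp continuous_subtype_val) _⟩ with hgdef
  have hgval : ∀ x : unitI, ((g x : unitI):ℝ) = PALeo.G f E n (x:ℝ) := fun x => rfl
  -- iterates
  have hit : ∀ (m : ℕ) (x : unitI), ((( ⇑g)^[m] x : unitI):ℝ) = (PALeo.G f E n)^[m] (x:ℝ) := by
    intro m
    induction m with
    | zero => intro x; rfl
    | succ m ih =>
      intro x
      rw [Function.iterate_succ_apply', Function.iterate_succ_apply', hgval, ih]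
  -- main covering property
  have hML : ∀ U : Set unitI, IsOpen U → U.Nonempty →
      ∃ M, 1 ≤ M ∧ (⇑g)^[M] '' U = Set.univ := by
    intro U hU hUne
    obtain ⟨V, hVopen, hVU⟩ := isOpen_induced_iff.mp hU
    obtain ⟨x0, hx0U⟩ := hUne
    have hx0V : (x0:ℝ) ∈ V := by
      rw [← hVU] at hx0U
      exact hx0U
    obtain ⟨η, hη0, hball⟩ := Metric.isOpen_iff.mp hVopen (x0:ℝ) hx0V
    obtain ⟨a0, b0, ha0, hb0, hab, hIcc⟩ := PALeo.shrink (x0:ℝ) η x0.2.1 x0.2.2 hη0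
    obtain ⟨M, hM1, hMfull⟩ := PALeo.PL f E n hE hE2 hn0 hn16 hUC hfdense a0 b0 ha0 hb0 hab
    refine ⟨M, hM1, ?_⟩
    rw [Set.eq_univ_iff_forall]
    intro y
    obtain ⟨z, hz, hGz⟩ := hMfull ⟨y.2.1, y.2.2⟩
    have hz01 := hIcc z hz
    refine ⟨⟨z, ⟨hz01.1, hz01.2.1⟩⟩, ?_, ?_⟩
    · rw [← hVU]
      exact hball (by rw [mem_ball, Real.dist_eq]; exact hz01.2.2)
    · apply Subtype.ext
      rw [hit M _]
      exact hGz
  -- surjectivity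
  have hsurj : Function.Surjective ⇑g := by
    obtain ⟨M, hM1, hMeq⟩ := hML Set.univ isOpen_univ ⟨⟨0, by norm_num, by norm_num⟩, trivial⟩
    obtain ⟨M', rfl⟩ : ∃ M', M = M' + 1 := ⟨M-1, by omega⟩
    intro y
    have : y ∈ (⇑g)^[M'+1] '' Set.univ := by rw [hMeq]; trivial
    obtain ⟨x, _, hx⟩ := this
    rw [Function.iterate_succ_apply'] at hx
    exact ⟨(⇑g)^[M'] x, hx⟩
  -- dense periodic points
  have hdenseg : Dense (Function.periodicPts ⇑g) := by
    rw [dense_iff_inter_open]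
    intro U hU hUne
    obtain ⟨V, hVopen, hVU⟩ := isOpen_induced_iff.mp hU
    obtain ⟨x0, hx0U⟩ := hUne
    have hx0V : (x0:ℝ) ∈ V := by rw [← hVU] at hx0U; exact hx0U
    obtain ⟨η, hη0, hball⟩ := Metric.isOpen_iff.mp hVopen (x0:ℝ) hx0V
    obtain ⟨a0, b0, ha0, hb0, hab, hIcc⟩ := PALeo.shrink (x0:ℝ) η x0.2.1 x0.2.2 hη0
    obtain ⟨M, hM1, hMfull⟩ := PALeo.PL f E n hE hE2 hn0 hn16 hUC hfdense a0 b0 ha0 hb0 hab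
    obtain ⟨u, hu, hGu⟩ := hMfull (⟨ha0, by linarith⟩ : a0 ∈ Set.Icc (0:ℝ) 1)
    obtain ⟨v, hv, hGv⟩ := hMfull (⟨by linarith, hb0⟩ : b0 ∈ Set.Icc (0:ℝ) 1)
    -- fixed point of G^[M] in [a0,b0]
    have hcont : Continuous ((PALeo.G f E n)^[M]) := (PALeo.contG f E n).iterate M
    have hφ : Continuous (fun x => (PALeo.G f E n)^[M] x - x) := hcont.sub continuous_id
    have h0mem : (0:ℝ) ∈ uIcc ((PALeo.G f E n)^[M] v - v) ((PALeo.G f E n)^[M] u - u) := by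
      rw [mem_uIcc]
      right
      constructor
      · rw [hGu]; linarith [hu.1]
      · rw [hGv]; linarith [hv.2]
    obtain ⟨z, hzmem, hzfix⟩ := intermediate_value_uIcc hφ.continuousOn h0mem
    have hzab : z ∈ Set.Icc a0 b0 := by
      have : uIcc v u ⊆ Set.Icc a0 b0 := uIcc_subset_Icc hv hu
      exact this hzmem
    have hzfix' : (PALeo.G f E n)^[M] z = z := by linarith [sub_eq_zero.mp hzfix]
    have hz01 := hIcc z hzab
    set zz : unitI := ⟨z, ⟨hz01.1, hz01.2.1⟩⟩ with hzz
    refine ⟨zz, ?_, M, by omega, ?_⟩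
    · rw [← hVU]
      exact hball (by rw [mem_ball, Real.dist_eq]; exact hz01.2.2)
    · apply Subtype.ext
      rw [hit M zz]
      exact hzfix'
  -- piecewise affine
  have hPA : PiecewiseAffine ⇑g := by
    refine ⟨6*n, fun k => (k:ℝ)/(6*(n:ℝ)), by omega, by norm_num, ?_, ?_, ?_⟩
    · push_cast
      rw [div_self (by positivity)]
    · intro i hi
      rw [div_lt_div_iff₀ (by positivity) (by positivity)]
      push_cast
      nlinarith
    · intro i hi
      refine ⟨6*n*(PALeo.W f E n (i+1) - PALeo.W f E n i),
        PALeo.W f E n i - i*(PALeo.W f E n (i+1) - PALeo.W f E n i), ?_⟩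
      intro x h1 h2
      have h2' : (x:ℝ) ≤ ((i:ℝ)+1)/(6*(n:ℝ)) := by push_cast at h2; exact h2
      have := PALeo.cellG f E n hn0 i hi (x:ℝ) h1 h2'
      rw [hgval x] at *
      rw [this]
      ring
  -- leo
  have hLeo : Leo ⇑g := by
    intro U hU hUne
    obtain ⟨M, _, hM⟩ := hML U hU hUne
    exact ⟨M, hM⟩
  -- distance
  have hdist : dist f g < ε := by
    rw [ContinuousMap.dist_lt_iff hε]
    intro x
    rw [Subtype.dist_eq, Real.dist_eq]
    have := PALeo.Gdist f E n hE hE2 hn0 hUC x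
    rw [abs_sub_comm] at this
    calc |((f x):ℝ) - ((g x):ℝ)| = |((f x):ℝ) - PALeo.G f E n (x:ℝ)| := by rw [hgval]
      _ ≤ 3*E/4 := this
      _ < ε := hEε
  exact ⟨g, ⟨hsurj, hdenseg⟩, hPA, hLeo, hdist⟩
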